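/- arXiv:1609.01999 — 3 statements merged into one kernel-verified Lean document; each statement's English description precedes it below -/
import Mathlib

section
/- Let A, B_1, ..., B_m be self-adjoint d×d matrices and p_1,...,p_m nonnegative weights summing to 1. If the eigenvalue vector λ(A) is weakly majorized by the convex combination sum_l p_l λ(B_l) (eigenvalues in decreasing order), then for every non-decreasing convex function f : R → [0,∞) and every unitarily invariant norm ‖·‖, one has ‖f(A)‖ ≤ sum_l p_l ‖f(B_l)‖. -/
open scoped BigOperators ComplexOrder

/-- The eigenvalues of a Hermitian matrix arranged in decreasing order
(counting multiplicities). -/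
noncomputable def eigDesc {d : ℕ} {A : Matrix (Fin d) (Fin d) ℂ} (hA : A.IsHermitian) :
    Fin d → ℝ :=
  fun i => (hA.eigenvalues ∘ Tuple.sort hA.eigenvalues) i.rev

/-- Functional calculus for a Hermitian matrix: apply `f` to the eigenvalues in the
spectral decomposition. -/
noncomputable def herFun {d : ℕ} {A : Matrix (Fin d) (Fin d) ℂ} (hA : A.IsHermitian)
    (f : ℝ → ℝ) : Matrix (Fin d) (Fin d) ℂ :=
  (hA.eigenvectorUnitary : Matrix (Fin d) (Fin d) ℂ) *
    Matrix.diagonal (fun i => (f (hA.eigenvalues i) : ℂ)) *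
    star (hA.eigenvectorUnitary : Matrix (Fin d) (Fin d) ℂ)

/-- A unitarily invariant norm on `d × d` complex matrices: a norm `N` with
`N (U X V) = N X` for all unitaries `U, V`. -/
structure UINorm (d : ℕ) where
  N : Matrix (Fin d) (Fin d) ℂ → ℝ
  add_le : ∀ X Y, N (X + Y) ≤ N X + N Y
  smul_eq : ∀ (c : ℂ) X, N (c • X) = ‖c‖ * N X
  pos_of_ne : ∀ X : Matrix (Fin d) (Fin d) ℂ, X ≠ 0 → (0:ℝ) < N X
  unitary_inv : ∀ U V X, U ∈ Matrix.unitaryGroup (Fin d) ℂ →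
    V ∈ Matrix.unitaryGroup (Fin d) ℂ → N (U * X * V) = N X


open scoped BigOperators

namespace WMaj

/-- Extend a `Fin n`-vector by zero. -/
noncomputable def ext {n : ℕ} (v : Fin n → ℝ) : ℕ → ℝ :=
  fun i => if h : i < n then v ⟨i, h⟩ else 0

/-- Partial sums. -/
noncomputable def PS {n : ℕ} (v : Fin n → ℝ) (k : ℕ) : ℝ :=
  ∑ i ∈ Finset.range k, ext v i

lemma ext_nonneg {n : ℕ} {v : Fin n → ℝ} (hv : ∀ i, 0 ≤ v i) (i : ℕ) : 0 ≤ ext v i := by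
  unfold ext; split <;> simp [hv _]

lemma PS_succ {n : ℕ} (v : Fin n → ℝ) (k : ℕ) : PS v (k + 1) = PS v k + ext v k :=
  Finset.sum_range_succ _ _

lemma PS_one {n : ℕ} (v : Fin (n+1) → ℝ) : PS v 1 = v 0 := by
  simp [PS, ext, Finset.sum_range_one]

lemma PS_saturate {n : ℕ} (v : Fin n → ℝ) {k : ℕ} (hk : n ≤ k) : PS v k = PS v n := by
  unfold PS
  rw [← Finset.sum_subset (Finset.range_subset_range.2 hk)]
  intro x _ hx
  simp only [Finset.mem_range, not_lt] at hx
  simp [ext, Nat.not_lt.2 hx, dif_neg]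

lemma PS_cons {n : ℕ} (a : ℝ) (u : Fin n → ℝ) (k : ℕ) :
    PS (Fin.cons a u) (k + 1) = a + PS u k := by
  unfold PS
  rw [Finset.sum_range_succ']
  have h0 : ext (Fin.cons a u) 0 = a := by simp [ext]
  rw [h0, add_comm]
  congr 1
  refine Finset.sum_congr rfl fun i _ => ?_
  unfold ext
  by_cases h : i < n
  · rw [dif_pos (by omega : i + 1 < n + 1), dif_pos h]
    exact Fin.cons_succ (α := fun _ => ℝ) a u ⟨i, h⟩
  · rw [dif_neg (by omega), dif_neg h]

/-- Abel-summation style lemma. -/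
lemma abel_lemma (s δ : ℕ → ℝ) (hs0 : ∀ i, 0 ≤ s i) (hs : ∀ i, s (i+1) ≤ s i) :
    ∀ k : ℕ, (∀ j ≤ k, 0 ≤ ∑ i ∈ Finset.range j, δ i) →
      s k * (∑ i ∈ Finset.range k, δ i) ≤ ∑ i ∈ Finset.range k, s i * δ i := by
  intro k
  induction k with
  | zero => simp
  | succ k ih =>
    intro hT
    have h1 := ih (fun j hj => hT j (by omega))
    rw [Finset.sum_range_succ, Finset.sum_range_succ]
    have h2 : s (k+1) * (∑ i ∈ Finset.range k, δ i + δ k)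
        ≤ s k * (∑ i ∈ Finset.range k, δ i + δ k) := by
      apply mul_le_mul_of_nonneg_right (hs k)
      have := hT (k+1) le_rfl
      rwa [Finset.sum_range_succ] at this
    calc s (k+1) * (∑ i ∈ Finset.range k, δ i + δ k)
        ≤ s k * (∑ i ∈ Finset.range k, δ i + δ k) := h2
      _ = s k * (∑ i ∈ Finset.range k, δ i) + s k * δ k := by ring
      _ ≤ ∑ i ∈ Finset.range k, s i * δ i + s k * δ k := by linarith

section Subgradient

variable {f : ℝ → ℝ}

/-- Left-slope supremum: a subgradient of a convex function. -/
noncomputable def sub (f : ℝ → ℝ) (t : ℝ) : ℝ :=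
  sSup ((fun u => (f t - f u) / (t - u)) '' Set.Iio t)

lemma slope_mono (hf : ConvexOn ℝ Set.univ f) {u t w : ℝ} (h1 : u < t) (h2 : t < w) :
    (f t - f u) / (t - u) ≤ (f w - f t) / (w - t) :=
  hf.slope_mono_adjacent trivial trivial h1 h2

lemma sub_bddAbove (hf : ConvexOn ℝ Set.univ f) (t : ℝ) :
    BddAbove ((fun u => (f t - f u) / (t - u)) '' Set.Iio t) := by
  refine ⟨(f (t+1) - f t) / (t + 1 - t), ?_⟩
  rintro x ⟨u, hu, rfl⟩
  exact slope_mono hf hu (by linarith)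

lemma sub_nonempty (t : ℝ) : ((fun u => (f t - f u) / (t - u)) '' Set.Iio t).Nonempty :=
  ⟨_, ⟨t - 1, by simp [sub_lt_self_iff], rfl⟩⟩

lemma le_sub_slope (hf : ConvexOn ℝ Set.univ f) {u t : ℝ} (h : u < t) :
    (f t - f u) / (t - u) ≤ sub f t :=
  le_csSup (sub_bddAbove hf t) ⟨u, h, rfl⟩

lemma sub_le_slope (hf : ConvexOn ℝ Set.univ f) {t w : ℝ} (h : t < w) :
    sub f t ≤ (f w - f t) / (w - t) := by
  refine csSup_le (sub_nonempty t) ?_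
  rintro x ⟨u, hu, rfl⟩
  exact slope_mono hf hu h

lemma sub_nonneg' (hf : ConvexOn ℝ Set.univ f) (hmono : Monotone f) (t : ℝ) :
    0 ≤ sub f t := by
  have h := le_sub_slope hf (show t - 1 < t by linarith)
  have : 0 ≤ (f t - f (t-1)) / (t - (t-1)) := by
    apply div_nonneg _ (by linarith)
    have := hmono (show t - 1 ≤ t by linarith); linarith
  linarith

lemma sub_mono (hf : ConvexOn ℝ Set.univ f) : Monotone (sub f) := by
  intro t₁ t₂ h
  rcases eq_or_lt_of_le h with rfl | h
  · exact le_rfl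
  · exact (sub_le_slope hf h).trans (le_sub_slope hf h)

lemma sub_grad (hf : ConvexOn ℝ Set.univ f) (t w : ℝ) :
    f t + sub f t * (w - t) ≤ f w := by
  rcases lt_trichotomy w t with h | rfl | h
  · have h1 := le_sub_slope hf h
    have h2 : (f t - f w) / (t - w) * (t - w) = f t - f w :=
      div_mul_cancel₀ _ (by linarith)
    nlinarith [mul_le_mul_of_nonneg_right h1 (by linarith : (0:ℝ) ≤ t - w)]
  · simp
  · have h1 := sub_le_slope hf h
    have h2 : (f w - f t) / (w - t) * (w - t) = f w - f t :=
      div_mul_cancel₀ _ (by linarith)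
    nlinarith [mul_le_mul_of_nonneg_right h1 (by linarith : (0:ℝ) ≤ w - t)]

end Subgradient

/-- Tomić's theorem: weak majorization is preserved by monotone convex functions. -/
lemma tomic {n : ℕ} (f : ℝ → ℝ) (hmono : Monotone f) (hconv : ConvexOn ℝ Set.univ f)
    (x y : Fin n → ℝ) (hx : Antitone x)
    (hm : ∀ k ≤ n, PS x k ≤ PS y k) :
    ∀ k ≤ n, PS (f ∘ x) k ≤ PS (f ∘ y) k := by
  intro k hk
  set s : ℕ → ℝ := fun i => if h : i < n then sub f (x ⟨i, h⟩) else 0 with hs_def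
  have hs0 : ∀ i, 0 ≤ s i := by
    intro i; simp only [hs_def]
    split
    · exact sub_nonneg' hconv hmono _
    · exact le_rfl
  have hsdec : ∀ i, s (i+1) ≤ s i := by
    intro i; simp only [hs_def]
    by_cases h1 : i + 1 < n
    · rw [dif_pos h1, dif_pos (by omega)]
      exact sub_mono hconv (hx (by simp [Fin.le_def]))
    · rw [dif_neg h1]
      exact hs0 i
  set δ : ℕ → ℝ := fun i => ext y i - ext x i with hδ_def
  have hT : ∀ j ≤ k, 0 ≤ ∑ i ∈ Finset.range j, δ i := by
    intro j hj
    have : ∑ i ∈ Finset.range j, δ i = PS y j - PS x j := by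
      simp [hδ_def, PS, Finset.sum_sub_distrib]
    rw [this]
    have := hm j (le_trans hj hk); linarith
  have habel := abel_lemma s δ hs0 hsdec k hT
  have hterm : ∀ i ∈ Finset.range k, ext (f ∘ x) i + s i * δ i ≤ ext (f ∘ y) i := by
    intro i hi
    simp only [Finset.mem_range] at hi
    have hin : i < n := lt_of_lt_of_le hi hk
    simp only [hs_def, hδ_def, ext, dif_pos hin, Function.comp]
    have := sub_grad hconv (x ⟨i, hin⟩) (y ⟨i, hin⟩)
    linarith
  have h2 : PS (f ∘ x) k + ∑ i ∈ Finset.range k, s i * δ i ≤ PS (f ∘ y) k := by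
    unfold PS
    rw [← Finset.sum_add_distrib]
    exact Finset.sum_le_sum hterm
  have h3 : 0 ≤ ∑ i ∈ Finset.range k, s i * δ i := by
    refine le_trans ?_ habel
    exact mul_nonneg (hs0 k) (hT k le_rfl)
  linarith


/-- **HLP-type lemma.** A permutation-invariant, quasiconvex, monotone functional
respects weak majorization of nonnegative decreasing vectors. -/
lemma key_lemma : ∀ {n : ℕ} (Ψ : (Fin n → ℝ) → ℝ),
    (∀ (σ : Equiv.Perm (Fin n)) (v : Fin n → ℝ), Ψ (v ∘ σ) = Ψ v) →
    (∀ t : ℝ, 0 ≤ t → t ≤ 1 → ∀ u v : Fin n → ℝ,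
      Ψ (t • u + (1 - t) • v) ≤ max (Ψ u) (Ψ v)) →
    (∀ u v : Fin n → ℝ, (∀ i, 0 ≤ u i) → (∀ i, u i ≤ v i) → Ψ u ≤ Ψ v) →
    ∀ x y : Fin n → ℝ, Antitone x → Antitone y → (∀ i, 0 ≤ x i) → (∀ i, 0 ≤ y i) →
    (∀ k, PS x k ≤ PS y k) → Ψ x ≤ Ψ y := by
  intro n
  induction n with
  | zero =>
    intro Ψ _ _ _ x y _ _ _ _ _
    have : x = y := funext fun i => i.elim0
    rw [this]
  | succ n IH =>
    intro Ψ hperm hconv hmono x y hx hy hx0 hy0 hm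
    set a := x 0 with ha_def
    have ha0 : 0 ≤ a := hx0 0
    by_cases hcase : a < y (Fin.last n)
    · refine hmono x y hx0 fun i => ?_
      calc x i ≤ x 0 := hx (Fin.zero_le i)
        _ ≤ y (Fin.last n) := hcase.le
        _ ≤ y i := hy (Fin.le_last i)
    push_neg at hcase
    have hay0 : a ≤ y 0 := by
      have h1 := hm 1
      rwa [PS_one, PS_one] at h1
    by_cases hn0 : n = 0
    · subst hn0
      refine hmono x y hx0 fun i => ?_
      have hi : i = 0 := by
        have := i.isLt; ext1; omega
      rw [hi]; exact hay0
    -- main case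
    have hnpos : 0 < n := Nat.pos_of_ne_zero hn0
    set S : Finset (Fin n) := Finset.univ.filter (fun i => a ≤ y i.castSucc) with hS_def
    have hS0 : (⟨0, hnpos⟩ : Fin n) ∈ S := by
      rw [hS_def, Finset.mem_filter]
      refine ⟨Finset.mem_univ _, ?_⟩
      have h : (⟨0, hnpos⟩ : Fin n).castSucc = (0 : Fin (n+1)) := by ext; simp
      rw [h]; exact hay0
    set j : Fin n := S.max' ⟨_, hS0⟩ with hj_def
    have hjc : a ≤ y j.castSucc := (Finset.mem_filter.1 (S.max'_mem ⟨_, hS0⟩)).2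
    have hjs : y j.succ ≤ a := by
      rcases lt_or_eq_of_le (Fin.le_last j.succ) with hlt | heq
      · have hv : (j : ℕ) + 1 < n := by
          simp only [Fin.lt_def, Fin.val_succ, Fin.val_last] at hlt
          omega
        set j' : Fin n := ⟨(j : ℕ) + 1, hv⟩ with hj'_def
        have hj'notin : j' ∉ S := by
          intro hmem
          have hle := S.le_max' j' hmem
          rw [← hj_def] at hle
          simp only [Fin.le_def, hj'_def] at hle
          omega
        have hlt2 : ¬ a ≤ y j'.castSucc := by
          intro hle
          exact hj'notin (by rw [hS_def, Finset.mem_filter]; exact ⟨Finset.mem_univ _, hle⟩)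
        have heq2 : j'.castSucc = j.succ := by ext; simp [hj'_def]
        rw [heq2] at hlt2
        linarith
      · rw [heq]; exact hcase
    set yk := y j.castSucc with hyk_def
    set yk1 := y j.succ with hyk1_def
    have hyk1yk : yk1 ≤ yk := le_trans hjs hjc
    -- the reduced vector
    set y' : Fin n → ℝ := fun i =>
      if i < j then y i.castSucc else if i = j then yk + yk1 - a else y i.succ with hy'_def
    have hsand : ∀ i : Fin n, y i.succ ≤ y' i ∧ y' i ≤ y i.castSucc := by
      intro i
      rcases lt_trichotomy i j with h | h | h
      · simp only [hy'_def]; simp only [if_pos h]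
        exact ⟨hy (Fin.castSucc_lt_succ : i.castSucc < i.succ).le, le_rfl⟩
      · simp only [hy'_def]
        rw [if_neg (by rw [h]; exact lt_irrefl j), if_pos h]
        constructor
        · rw [h]; linarith
        · rw [h]; linarith
      · simp only [hy'_def]; rw [if_neg (not_lt.2 h.le), if_neg h.ne']
        exact ⟨le_rfl, hy (Fin.castSucc_lt_succ : i.castSucc < i.succ).le⟩
    have hy'anti : Antitone y' := by
      intro i i' h
      rcases eq_or_lt_of_le h with rfl | h
      · exact le_rfl
      · calc y' i' ≤ y i'.castSucc := (hsand i').2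
          _ ≤ y i.succ := hy (by
            simp only [Fin.le_def, Fin.val_succ, Fin.coe_castSucc]
            exact h)
          _ ≤ y' i := (hsand i).1
    have hy'0 : ∀ i, 0 ≤ y' i := fun i => le_trans (hy0 _) (hsand i).1
    -- the T-transformed vector ytil
    have hne : j.castSucc ≠ j.succ := (Fin.castSucc_lt_succ : j.castSucc < j.succ).ne
    set ytil : Fin (n+1) → ℝ :=
      Function.update (Function.update y j.castSucc a) j.succ (yk + yk1 - a) with hytil_def
    set t : ℝ := if yk = yk1 then 1 else (a - yk1) / (yk - yk1) with ht_def
    have ht0 : 0 ≤ t := by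
      rw [ht_def]; split
      · norm_num
      · apply div_nonneg <;> linarith
    have ht1 : t ≤ 1 := by
      rw [ht_def]; split
      · norm_num
      · rename_i hne2
        have hlt : yk1 < yk := lt_of_le_of_ne hyk1yk (fun hh => hne2 hh.symm)
        rw [div_le_one (by linarith)]
        linarith
    have htyk : t * yk + (1 - t) * yk1 = a := by
      rw [ht_def]; split
      · rename_i h; linarith
      · rename_i hne2
        have hd : yk - yk1 ≠ 0 := sub_ne_zero.2 hne2
        field_simp
        ring
    have htyk1 : t * yk1 + (1 - t) * yk = yk + yk1 - a := by
      nlinarith [htyk]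
    have hcomb : t • y + (1 - t) • (y ∘ (Equiv.swap j.castSucc j.succ)) = ytil := by
      funext i
      simp only [Pi.add_apply, Pi.smul_apply, smul_eq_mul, Function.comp_apply]
      by_cases hi1 : i = j.castSucc
      · rw [hi1, Equiv.swap_apply_left, hytil_def,
          Function.update_of_ne hne, Function.update_self]
        exact htyk
      · by_cases hi2 : i = j.succ
        · rw [hi2, Equiv.swap_apply_right, hytil_def, Function.update_self]
          exact htyk1
        · rw [Equiv.swap_apply_of_ne_of_ne hi1 hi2, hytil_def,
            Function.update_of_ne hi2, Function.update_of_ne hi1]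
          ring
    have hstep1 : Ψ ytil ≤ Ψ y := by
      rw [← hcomb]
      refine le_trans (hconv t ht0 ht1 y (y ∘ (Equiv.swap j.castSucc j.succ))) ?_
      rw [hperm (Equiv.swap j.castSucc j.succ) y]
      exact max_le le_rfl le_rfl
    -- ytil is a permutation of (cons a y')
    set π : Equiv.Perm (Fin (n+1)) := Fin.cycleRange j.castSucc with hπ_def
    have hcyc : ytil = (Fin.cons a y' : Fin (n+1) → ℝ) ∘ π := by
      funext i
      simp only [Function.comp_apply]
      rcases lt_trichotomy i j.castSucc with h | h | h
      · rw [hπ_def, Fin.cycleRange_of_lt h]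
        have hv : (i : ℕ) < n := lt_of_lt_of_le h (by
          simp only [Fin.le_def, Fin.coe_castSucc]
          omega)
        have hisucc : i + 1 = Fin.succ (⟨(i : ℕ), hv⟩ : Fin n) := by
          ext
          rw [Fin.val_add_one_of_lt (lt_of_lt_of_le h (Fin.le_last _))]
          simp
        rw [hisucc, Fin.cons_succ]
        have hij : (⟨(i : ℕ), hv⟩ : Fin n) < j := by
          simp only [Fin.lt_def]
          simpa [Fin.lt_def] using h
        simp only [hy'_def]
        simp only [if_pos hij]
        have : (⟨(i : ℕ), hv⟩ : Fin n).castSucc = i := by ext; simp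
        have hne1' : i ≠ j.succ := by
          intro hh
          rw [hh] at h
          simp only [Fin.lt_def, Fin.val_succ, Fin.coe_castSucc] at h
          omega
        rw [this, hytil_def, Function.update_of_ne hne1', Function.update_of_ne h.ne]
      · rw [hπ_def, h, Fin.cycleRange_self, Fin.cons_zero, hytil_def,
          Function.update_of_ne hne, Function.update_self]
      · rw [hπ_def, Fin.cycleRange_of_gt h]
        have hv : 1 ≤ (i : ℕ) := by
          have := h
          simp only [Fin.lt_def, Fin.coe_castSucc] at this
          omega
        have hv2 : (i : ℕ) - 1 < n := by
          have := i.isLt; omega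
        set i' : Fin n := ⟨(i : ℕ) - 1, hv2⟩ with hi'_def
        have hisucc : i = i'.succ := by
          ext; simp [hi'_def]; omega
        rw [hisucc, Fin.cons_succ]
        have hij : ¬ (i' < j) := by
          simp only [Fin.lt_def, hi'_def] at h ⊢
          simp only [Fin.coe_castSucc] at h
          omega
        by_cases hij2 : i' = j
        · simp only [hy'_def, if_neg hij, if_pos hij2, hij2, hytil_def, Function.update_self]
          simp
        · simp only [hy'_def, if_neg hij, if_neg hij2]
          have hne1 : i'.succ ≠ j.succ := fun hh => hij2 (Fin.succ_injective _ hh)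
          have hne2 : i'.succ ≠ j.castSucc := by
            rw [← hisucc]; exact h.ne'
          rw [hytil_def, Function.update_of_ne hne1, Function.update_of_ne hne2]
    have hstep2 : Ψ (Fin.cons a y') = Ψ ytil := by
      rw [hcyc, hperm π]
    -- IH application
    set Ψ' : (Fin n → ℝ) → ℝ := fun z => Ψ (Fin.cons a z) with hΨ'_def
    have hcons_comp : ∀ (σ : Equiv.Perm (Fin n)) (v : Fin n → ℝ),
        (Fin.cons a (v ∘ σ) : Fin (n+1) → ℝ)
          = (Fin.cons a v : Fin (n+1) → ℝ) ∘ (Equiv.Perm.decomposeFin.symm (0, σ)) := by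
      intro σ v
      funext i
      induction i using Fin.cases with
      | zero => simp
      | succ i => simp [Equiv.Perm.decomposeFin_symm_apply_succ]
    have hperm' : ∀ (σ : Equiv.Perm (Fin n)) (v : Fin n → ℝ), Ψ' (v ∘ σ) = Ψ' v := by
      intro σ v
      rw [hΨ'_def]
      simp only
      rw [hcons_comp σ v, hperm]
    have hconv' : ∀ s : ℝ, 0 ≤ s → s ≤ 1 → ∀ u v : Fin n → ℝ,
        Ψ' (s • u + (1 - s) • v) ≤ max (Ψ' u) (Ψ' v) := by
      intro s hs0 hs1 u v
      rw [hΨ'_def]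
      simp only
      have : (Fin.cons a (s • u + (1 - s) • v) : Fin (n+1) → ℝ)
          = s • (Fin.cons a u : Fin (n+1) → ℝ) + (1 - s) • (Fin.cons a v : Fin (n+1) → ℝ) := by
        funext i
        induction i using Fin.cases with
        | zero => simp; ring
        | succ i => simp
      rw [this]
      exact hconv s hs0 hs1 _ _
    have hmono' : ∀ u v : Fin n → ℝ, (∀ i, 0 ≤ u i) → (∀ i, u i ≤ v i) → Ψ' u ≤ Ψ' v := by
      intro u v hu huv
      rw [hΨ'_def]
      refine hmono _ _ (fun i => ?_) (fun i => ?_)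
      · induction i using Fin.cases with
        | zero => exact ha0
        | succ i => simpa using hu i
      · induction i using Fin.cases with
        | zero => simp
        | succ i => simpa using huv i
    set x' : Fin n → ℝ := fun i => x i.succ with hx'_def
    have hxcons : x = Fin.cons a x' := by
      funext i
      induction i using Fin.cases with
      | zero => simp [ha_def]
      | succ i => simp [hx'_def]
    have hx'anti : Antitone x' := fun i i' h => hx (by
      simp only [Fin.le_def, Fin.val_succ]
      exact Nat.add_le_add_right h 1)
    have hx'0 : ∀ i, 0 ≤ x' i := fun i => hx0 _
    -- partial sums for x', y'
    have hshift : ∀ k, PS x' k ≤ PS x k := by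
      intro k
      refine Finset.sum_le_sum fun i _ => ?_
      unfold ext
      by_cases hi : i < n
      · rw [dif_pos hi, dif_pos (by omega : i < n + 1)]
        rw [hx'_def]
        refine hx ?_
        simp [Fin.le_def]
      · rw [dif_neg hi]
        by_cases hi2 : i < n + 1
        · rw [dif_pos hi2]; exact hx0 _
        · rw [dif_neg hi2]
    have hyy' : ∀ k, k ≤ (j : ℕ) → PS y' k = PS y k := by
      intro k hk
      refine Finset.sum_congr rfl fun i hi => ?_
      rw [Finset.mem_range] at hi
      have hin : i < n := by have := j.isLt; omega
      unfold ext
      rw [dif_pos hin, dif_pos (by omega : i < n + 1)]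
      simp only [hy'_def]
      have hij : (⟨i, hin⟩ : Fin n) < j := by
        simp only [Fin.lt_def]; omega
      simp only [if_pos hij]
      rfl
    have hidB : ∀ k, (j : ℕ) + 1 ≤ k → PS y' k = PS y (k+1) - a := by
      intro k hk
      induction k, hk using Nat.le_induction with
      | base =>
        rw [PS_succ]
        rw [hyy' _ le_rfl]
        have he1 : ext y' (j : ℕ) = yk + yk1 - a := by
          unfold ext
          rw [dif_pos j.isLt]
          simp only [hy'_def]
          have : (⟨(j : ℕ), j.isLt⟩ : Fin n) = j := by ext; rfl
          rw [this]
          simp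
        rw [he1]
        have he2 : PS y ((j : ℕ) + 1 + 1) = PS y (j : ℕ) + yk + yk1 := by
          rw [PS_succ, PS_succ]
          have hy1 : ext y (j : ℕ) = yk := by
            unfold ext
            rw [dif_pos (by have := j.isLt; omega : (j:ℕ) < n + 1)]
            rw [hyk_def]
            rfl
          have hy2 : ext y ((j : ℕ) + 1) = yk1 := by
            unfold ext
            rw [dif_pos (by have := j.isLt; omega : (j:ℕ) + 1 < n + 1)]
            rw [hyk1_def]
            rfl
          rw [hy1, hy2]
        rw [he2]; ring
      | succ k hk ihk =>
        have e2 : PS y (k+1+1) = PS y (k+1) + ext y (k+1) := PS_succ y (k+1)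
        have he : ext y' k = ext y (k+1) := by
          unfold ext
          by_cases hkn : k < n
          · rw [dif_pos hkn, dif_pos (by omega : k + 1 < n + 1)]
            simp only [hy'_def]
            have h1 : ¬ ((⟨k, hkn⟩ : Fin n) < j) := by
              simp only [Fin.lt_def]; omega
            have h2 : ¬ ((⟨k, hkn⟩ : Fin n) = j) := by
              intro hh
              have := congrArg Fin.val hh
              simp at this; omega
            simp only [if_neg h1, if_neg h2]
            rfl
          · rw [dif_neg hkn, dif_neg (by omega : ¬ (k + 1 < n + 1))]
        rw [PS_succ, ihk, he, e2]
        ring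
    have hm' : ∀ k, PS x' k ≤ PS y' k := by
      intro k
      by_cases hk : k ≤ (j : ℕ)
      · rw [hyy' k hk]
        exact le_trans (hshift k) (hm k)
      · push_neg at hk
        rw [hidB k hk]
        have h1 : PS x (k + 1) = a + PS x' k := by
          rw [hxcons, PS_cons]
        have := hm (k+1)
        rw [h1] at this
        linarith
    have hIH : Ψ' x' ≤ Ψ' y' :=
      IH Ψ' hperm' hconv' hmono' x' y' hx'anti hy'anti hx'0 hy'0 hm'
    calc Ψ x = Ψ (Fin.cons a x') := by rw [← hxcons]
      _ ≤ Ψ (Fin.cons a y') := hIH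
      _ = Ψ ytil := hstep2
      _ ≤ Ψ y := hstep1


section MatrixSide

variable {d : ℕ} (Φ : UINorm d)

/-- The symmetric gauge associated to a unitarily invariant norm. -/
noncomputable def Psi (v : Fin d → ℝ) : ℝ :=
  Φ.N (Matrix.diagonal (fun i => (v i : ℂ)))

lemma N_zero : Φ.N 0 = 0 := by
  have h := Φ.smul_eq 0 0
  simpa using h

lemma N_sum_le {ι : Type*} (s : Finset ι) (M : ι → Matrix (Fin d) (Fin d) ℂ) :
    Φ.N (∑ i ∈ s, M i) ≤ ∑ i ∈ s, Φ.N (M i) := by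
  classical
  induction s using Finset.induction_on with
  | empty => simp [N_zero]
  | insert a s ha ih =>
    rw [Finset.sum_insert ha, Finset.sum_insert ha]
    exact le_trans (Φ.add_le _ _) (by linarith)

/-- The permutation matrix of `σ`. -/
def permMat (σ : Equiv.Perm (Fin d)) : Matrix (Fin d) (Fin d) ℂ :=
  Matrix.of fun i j => if σ i = j then (1 : ℂ) else 0

lemma permMat_mem (σ : Equiv.Perm (Fin d)) : permMat σ ∈ Matrix.unitaryGroup (Fin d) ℂ := by
  rw [Matrix.mem_unitaryGroup_iff']
  ext i j
  rw [Matrix.mul_apply, Matrix.one_apply]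
  simp only [Matrix.star_apply, permMat, Matrix.of_apply, apply_ite (star : ℂ → ℂ),
    star_one, star_zero]
  rw [Finset.sum_eq_single (σ.symm i)]
  · by_cases h : i = j
    · subst h; simp
    · have h2 : σ (σ.symm i) ≠ j := by
        rw [Equiv.apply_symm_apply]; exact h
      simp [h, h2]
  · intro k _ hk
    have : σ k ≠ i := fun hh => hk (by rw [← hh]; simp)
    simp [this]
  · intro h; exact absurd (Finset.mem_univ _) h

lemma permMat_conj (σ : Equiv.Perm (Fin d)) (w : Fin d → ℂ) :
    permMat σ * Matrix.diagonal w * star (permMat σ) = Matrix.diagonal (w ∘ σ) := by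
  ext i j
  rw [Matrix.mul_apply]
  have hPD : ∀ k, (permMat σ * Matrix.diagonal w) i k = if σ i = k then w (σ i) else 0 := by
    intro k
    rw [Matrix.mul_apply]
    rw [Finset.sum_eq_single (σ i)]
    · simp [permMat, Matrix.diagonal_apply]
    · intro b _ hb
      simp only [permMat, Matrix.of_apply]
      rw [if_neg (Ne.symm hb), zero_mul]
    · intro h; exact absurd (Finset.mem_univ _) h
  have hstar : ∀ k, (star (permMat σ)) k j = if σ j = k then 1 else 0 := by
    intro k
    simp only [Matrix.star_apply, permMat, Matrix.of_apply]
    by_cases h : σ j = k <;> simp [h]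
  calc (∑ k, (permMat σ * Matrix.diagonal w) i k * (star (permMat σ)) k j)
      = ∑ k, (if σ i = k then w (σ i) else 0) * (if σ j = k then 1 else 0) :=
        Finset.sum_congr rfl fun k _ => by rw [hPD k, hstar k]
    _ = Matrix.diagonal (w ∘ σ) i j := by
        rw [Finset.sum_eq_single (σ i)]
        · rw [if_pos rfl, Matrix.diagonal_apply]
          by_cases h : i = j
          · subst h; simp
          · have h2 : σ j ≠ σ i := fun hh => h (σ.injective hh).symm
            rw [if_neg h2, if_neg h, mul_zero]
        · intro b _ hb
          rw [if_neg (fun hh => hb hh.symm), zero_mul]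
        · intro h; exact absurd (Finset.mem_univ _) h

lemma Psi_perm (σ : Equiv.Perm (Fin d)) (v : Fin d → ℝ) : Psi Φ (v ∘ σ) = Psi Φ v := by
  unfold Psi
  have h1 : (fun i => ((v ∘ σ) i : ℂ)) = (fun i => (v i : ℂ)) ∘ σ := rfl
  rw [h1, ← permMat_conj σ]
  exact Φ.unitary_inv _ _ _ (permMat_mem σ) (Unitary.star_mem (permMat_mem σ))

lemma Psi_conv : ∀ t : ℝ, 0 ≤ t → t ≤ 1 → ∀ u v : Fin d → ℝ,
    Psi Φ (t • u + (1 - t) • v) ≤ max (Psi Φ u) (Psi Φ v) := by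
  intro t ht0 ht1 u v
  unfold Psi
  have hdiag : Matrix.diagonal (fun i => (((t • u + (1 - t) • v) i : ℝ) : ℂ))
      = ((t : ℂ)) • Matrix.diagonal (fun i => (u i : ℂ))
        + (((1 - t : ℝ) : ℂ)) • Matrix.diagonal (fun i => (v i : ℂ)) := by
    ext i j
    simp only [Matrix.diagonal_apply, Matrix.add_apply, Matrix.smul_apply, smul_eq_mul,
      Pi.add_apply, Pi.smul_apply]
    by_cases h : i = j
    · simp only [if_pos h]
      push_cast
      ring
    · simp [h]
  rw [hdiag]
  refine le_trans (Φ.add_le _ _) ?_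
  rw [Φ.smul_eq, Φ.smul_eq]
  have hn1 : ‖(t : ℂ)‖ = t := by
    rw [Complex.norm_real]; exact abs_of_nonneg ht0
  have hn2 : ‖((1 - t : ℝ) : ℂ)‖ = 1 - t := by
    rw [Complex.norm_real]; exact abs_of_nonneg (by linarith)
  rw [hn1, hn2]
  have h1 : Φ.N (Matrix.diagonal fun i => (u i : ℂ)) ≤
      max (Φ.N (Matrix.diagonal fun i => (u i : ℂ))) (Φ.N (Matrix.diagonal fun i => (v i : ℂ))) :=
    le_max_left _ _
  have h2 : Φ.N (Matrix.diagonal fun i => (v i : ℂ)) ≤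
      max (Φ.N (Matrix.diagonal fun i => (u i : ℂ))) (Φ.N (Matrix.diagonal fun i => (v i : ℂ))) :=
    le_max_right _ _
  nlinarith

lemma Psi_update (w : Fin d → ℝ) (i₀ : Fin d) (c : ℝ) (hc0 : 0 ≤ c) (hcw : c ≤ w i₀) :
    Psi Φ (Function.update w i₀ c) ≤ Psi Φ w := by
  by_cases hw0 : w i₀ = 0
  · have hc : c = w i₀ := le_antisymm hcw (hw0 ▸ hc0)
    rw [hc, Function.update_eq_self]
  · have hwpos : 0 < w i₀ := lt_of_le_of_ne (le_trans hc0 hcw) (Ne.symm hw0)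
    set t : ℝ := c / w i₀ with ht_def
    have ht0 : 0 ≤ t := div_nonneg hc0 hwpos.le
    have ht1 : t ≤ 1 := (div_le_one hwpos).2 hcw
    set E : Matrix (Fin d) (Fin d) ℂ :=
      Matrix.diagonal (fun j => if j = i₀ then (-1 : ℂ) else 1) with hE_def
    have hEmem : E ∈ Matrix.unitaryGroup (Fin d) ℂ := by
      rw [Matrix.mem_unitaryGroup_iff']
      rw [hE_def, Matrix.star_eq_conjTranspose, Matrix.diagonal_conjTranspose,
        Matrix.diagonal_mul_diagonal]
      ext i j
      simp only [Matrix.diagonal_apply, Matrix.one_apply, Pi.mul_apply, Pi.star_apply]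
      by_cases h : i = j
      · subst h
        by_cases h2 : i = i₀ <;> simp [h2]
      · simp [h]
    have hkey : Matrix.diagonal (fun i => ((Function.update w i₀ c) i : ℂ))
        = (((1 + t) / 2 : ℝ) : ℂ) • Matrix.diagonal (fun i => (w i : ℂ))
          + (((1 - t) / 2 : ℝ) : ℂ) • (E * Matrix.diagonal (fun i => (w i : ℂ))) := by
      rw [hE_def, Matrix.diagonal_mul_diagonal]
      ext i j
      simp only [Matrix.diagonal_apply, Matrix.add_apply, Matrix.smul_apply, smul_eq_mul,
        Pi.mul_apply]
      by_cases h : i = j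
      · simp only [if_pos h]
        by_cases h2 : i = i₀
        · rw [h2, Function.update_self, if_pos rfl]
          have hc : t * w i₀ = c := by
            rw [ht_def]; exact div_mul_cancel₀ c hw0
          push_cast
          rw [← hc]
          push_cast
          ring
        · rw [Function.update_of_ne h2, if_neg h2]
          push_cast
          ring
      · simp [h]
    unfold Psi
    rw [hkey]
    refine le_trans (Φ.add_le _ _) ?_
    rw [Φ.smul_eq, Φ.smul_eq]
    have hEN : Φ.N (E * Matrix.diagonal (fun i => (w i : ℂ)))
        = Φ.N (Matrix.diagonal (fun i => (w i : ℂ))) := by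
      rw [← mul_one (E * Matrix.diagonal (fun i => (w i : ℂ)))]
      exact Φ.unitary_inv _ _ _ hEmem (Submonoid.one_mem _)
    rw [hEN]
    have hn1 : ‖(((1 + t) / 2 : ℝ) : ℂ)‖ = (1 + t) / 2 := by
      rw [Complex.norm_real]; exact abs_of_nonneg (by linarith)
    have hn2 : ‖(((1 - t) / 2 : ℝ) : ℂ)‖ = (1 - t) / 2 := by
      rw [Complex.norm_real]; exact abs_of_nonneg (by linarith)
    rw [hn1, hn2]
    nlinarith [Φ.N (Matrix.diagonal (fun i => (w i : ℂ)))]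

lemma Psi_mono : ∀ u v : Fin d → ℝ, (∀ i, 0 ≤ u i) → (∀ i, u i ≤ v i) →
    Psi Φ u ≤ Psi Φ v := by
  intro u v hu huv
  classical
  have claim : ∀ s : Finset (Fin d), Psi Φ (fun i => if i ∈ s then u i else v i) ≤ Psi Φ v := by
    intro s
    induction s using Finset.induction_on with
    | empty => simp
    | insert a s ha ih =>
      have hupdate : (fun i => if i ∈ insert a s then u i else v i)
          = Function.update (fun i => if i ∈ s then u i else v i) a (u a) := by
        funext i
        by_cases h : i = a
        · subst h
          rw [Function.update_self, if_pos (Finset.mem_insert_self _ _)]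
        · rw [Function.update_of_ne h]
          simp [Finset.mem_insert, h]
      rw [hupdate]
      refine le_trans (Psi_update Φ _ a (u a) (hu a) ?_) ih
      simpa [ha] using huv a
  have := claim Finset.univ
  simpa using this

end MatrixSide

/-- Converting partial sums to the filtered form used in the theorem statement. -/
lemma PS_eq_filter {d : ℕ} (v : Fin d → ℝ) (k : ℕ) :
    PS v k = ∑ i ∈ Finset.univ.filter (fun i : Fin d => (i : ℕ) < k), v i := by
  classical
  set F : ℕ → ℝ := fun i => if i < k then ext v i else 0 with hF_def
  have h1 : PS v k = ∑ i ∈ Finset.range k, F i := by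
    refine Finset.sum_congr rfl fun i hi => ?_
    rw [Finset.mem_range] at hi
    rw [hF_def]; simp [hi]
  have h2 : ∑ i ∈ Finset.range k, F i = ∑ i ∈ Finset.range (max k d), F i := by
    refine Finset.sum_subset (Finset.range_subset_range.2 (le_max_left _ _)) fun i _ hi => ?_
    rw [Finset.mem_range] at hi
    rw [hF_def]; simp only
    rw [if_neg (by omega)]
  have h3 : ∑ i ∈ Finset.range d, F i = ∑ i ∈ Finset.range (max k d), F i := by
    refine Finset.sum_subset (Finset.range_subset_range.2 (le_max_right _ _)) fun i hi2 hi => ?_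
    rw [Finset.mem_range] at hi
    rw [hF_def]
    simp only
    unfold ext
    rw [dif_neg (by omega)]
    simp
  have h4 : ∑ i ∈ Finset.range d, F i = ∑ i : Fin d, F (i : ℕ) :=
    (Fin.sum_univ_eq_sum_range F d).symm
  have h5 : ∑ i : Fin d, F (i : ℕ) =
      ∑ i ∈ Finset.univ.filter (fun i : Fin d => (i : ℕ) < k), v i := by
    rw [Finset.sum_filter]
    refine Finset.sum_congr rfl fun i _ => ?_
    rw [hF_def]
    simp only
    unfold ext
    by_cases h : (i : ℕ) < k
    · rw [if_pos h, if_pos h, dif_pos i.isLt]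
    · rw [if_neg h, if_neg h]
  rw [h1, h2, ← h3, h4, h5]

lemma eigDesc_antitone {d : ℕ} {A : Matrix (Fin d) (Fin d) ℂ} (hA : A.IsHermitian) :
    Antitone (eigDesc hA) := by
  intro i i' h
  exact Tuple.monotone_sort hA.eigenvalues (Fin.rev_le_rev.2 h)

end WMaj

/-- **Theorem 3.1, (a) ⇒ (b), discrete case.** If `λ(A) ≺_w ∑ l, p l • λ(B l)` for
self-adjoint matrices `A, B l` and weights `p l ≥ 0` summing to `1`, then for every
non-decreasing convex `f : ℝ → [0,∞)` and every unitarily invariant norm `N`,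
`N (f(A)) ≤ ∑ l, p l * N (f(B l))`. -/
theorem weak_majorization_average_implies_norm_ineq
    {d m : ℕ} {A : Matrix (Fin d) (Fin d) ℂ} (hA : A.IsHermitian)
    {B : Fin m → Matrix (Fin d) (Fin d) ℂ} (hB : ∀ l, (B l).IsHermitian)
    (p : Fin m → ℝ) (hp : ∀ l, 0 ≤ p l) (hp_sum : ∑ l, p l = 1)
    (hmaj : ∀ k, k ≤ d →
      ∑ i ∈ Finset.univ.filter (fun i : Fin d => (i : ℕ) < k), eigDesc hA i ≤
      ∑ i ∈ Finset.univ.filter (fun i : Fin d => (i : ℕ) < k), ∑ l, p l * eigDesc (hB l) i) :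
    ∀ f : ℝ → ℝ, Monotone f → ConvexOn ℝ Set.univ f → (∀ x, 0 ≤ f x) →
      ∀ Φ : UINorm d, Φ.N (herFun hA f) ≤ ∑ l, p l * Φ.N (herFun (hB l) f) := by
  intro f hfmono hfconv hf0 Φ
  classical
  set x : Fin d → ℝ := eigDesc hA with hx_def
  set bl : Fin m → Fin d → ℝ := fun l i => f (eigDesc (hB l) i) with hbl_def
  set yav : Fin d → ℝ := fun i => ∑ l, p l * eigDesc (hB l) i with hyav_def
  set c : Fin d → ℝ := fun i => ∑ l, p l * bl l i with hc_def
  have hx_anti : Antitone x := WMaj.eigDesc_antitone hA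
  have hbl_anti : ∀ l, Antitone (bl l) :=
    fun l => hfmono.comp_antitone (WMaj.eigDesc_antitone (hB l))
  have hm0 : ∀ k, k ≤ d → WMaj.PS x k ≤ WMaj.PS yav k := by
    intro k hk
    rw [WMaj.PS_eq_filter, WMaj.PS_eq_filter]
    exact hmaj k hk
  have htom : ∀ k, k ≤ d → WMaj.PS (f ∘ x) k ≤ WMaj.PS (f ∘ yav) k :=
    WMaj.tomic f hfmono hfconv x yav hx_anti hm0
  have hjen : ∀ i, f (yav i) ≤ c i := by
    intro i
    have h := ConvexOn.map_sum_le (t := Finset.univ) (w := p)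
      (p := fun l => eigDesc (hB l) i) hfconv (fun l _ => hp l) hp_sum
      (fun l _ => Set.mem_univ _)
    simpa [smul_eq_mul, hc_def, hbl_def, hyav_def] using h
  have hps_c : ∀ k, k ≤ d → WMaj.PS (f ∘ yav) k ≤ WMaj.PS c k := by
    intro k hk
    refine Finset.sum_le_sum fun i hi => ?_
    rw [Finset.mem_range] at hi
    have hid : i < d := lt_of_lt_of_le hi hk
    unfold WMaj.ext
    rw [dif_pos hid, dif_pos hid]
    exact hjen _
  have hm : ∀ k, WMaj.PS (f ∘ x) k ≤ WMaj.PS c k := by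
    intro k
    by_cases hk : k ≤ d
    · exact le_trans (htom k hk) (hps_c k hk)
    · push_neg at hk
      rw [WMaj.PS_saturate _ hk.le, WMaj.PS_saturate (v := c) hk.le]
      exact le_trans (htom d le_rfl) (hps_c d le_rfl)
  have h1 : Antitone (f ∘ x) := hfmono.comp_antitone hx_anti
  have h2 : Antitone c := fun i i' h =>
    Finset.sum_le_sum fun l _ => mul_le_mul_of_nonneg_left (hbl_anti l h) (hp l)
  have h3 : ∀ i, 0 ≤ (f ∘ x) i := fun i => hf0 _
  have h4 : ∀ i, 0 ≤ c i := fun i =>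
    Finset.sum_nonneg fun l _ => mul_nonneg (hp l) (hf0 _)
  have hkey : WMaj.Psi Φ (f ∘ x) ≤ WMaj.Psi Φ c :=
    WMaj.key_lemma (WMaj.Psi Φ) (WMaj.Psi_perm Φ) (WMaj.Psi_conv Φ) (WMaj.Psi_mono Φ)
      (f ∘ x) c h1 h2 h3 h4 hm
  have hherA : Φ.N (herFun hA f) = WMaj.Psi Φ (fun i => f (hA.eigenvalues i)) :=
    Φ.unitary_inv _ _ _ hA.eigenvectorUnitary.2
      (Unitary.star_mem hA.eigenvectorUnitary.2)
  have hpermA : WMaj.Psi Φ (fun i => f (hA.eigenvalues i)) = WMaj.Psi Φ (f ∘ x) := by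
    have he : (f ∘ x) = (fun i => f (hA.eigenvalues i))
        ∘ (Fin.revPerm.trans (Tuple.sort hA.eigenvalues)) := by
      funext i
      simp [hx_def, eigDesc, Fin.revPerm]
    rw [he, WMaj.Psi_perm]
  have hherB : ∀ l, WMaj.Psi Φ (bl l) = Φ.N (herFun (hB l) f) := by
    intro l
    have e1 : Φ.N (herFun (hB l) f) = WMaj.Psi Φ (fun i => f ((hB l).eigenvalues i)) :=
      Φ.unitary_inv _ _ _ (hB l).eigenvectorUnitary.2
        (Unitary.star_mem (hB l).eigenvectorUnitary.2)
    have e2 : bl l = (fun i => f ((hB l).eigenvalues i))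
        ∘ (Fin.revPerm.trans (Tuple.sort (hB l).eigenvalues)) := by
      funext i
      simp [hbl_def, eigDesc, Fin.revPerm]
    rw [e1, e2, WMaj.Psi_perm]
  have hdiagsum : Matrix.diagonal (fun i => (c i : ℂ))
      = ∑ l, ((p l : ℝ) : ℂ) • Matrix.diagonal (fun i => (bl l i : ℂ)) := by
    ext i j
    rw [Matrix.sum_apply]
    simp only [Matrix.smul_apply, Matrix.diagonal_apply, smul_eq_mul]
    by_cases h : i = j
    · simp only [if_pos h, hc_def, mul_ite, mul_zero]
      push_cast
      rfl
    · simp [h]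
  have hfinal : WMaj.Psi Φ c ≤ ∑ l, p l * WMaj.Psi Φ (bl l) := by
    unfold WMaj.Psi
    rw [hdiagsum]
    refine le_trans (WMaj.N_sum_le Φ _ _) ?_
    refine Finset.sum_le_sum fun l _ => ?_
    rw [Φ.smul_eq, Complex.norm_real, Real.norm_eq_abs, abs_of_nonneg (hp l)]
  calc Φ.N (herFun hA f) = WMaj.Psi Φ (f ∘ x) := by rw [hherA, hpermA]
    _ ≤ WMaj.Psi Φ c := hkey
    _ ≤ ∑ l, p l * WMaj.Psi Φ (bl l) := hfinal
    _ = ∑ l, p l * Φ.N (herFun (hB l) f) := by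
        refine Finset.sum_congr rfl fun l _ => ?_
        rw [hherB l]
end

section
/- Let A, B_1, ..., B_m be self-adjoint d×d matrices and p_1,...,p_m nonnegative weights summing to 1. Suppose that for every non-decreasing convex function f : R → [0,∞) and every unitarily invariant norm ‖·‖ one has ‖f(A)‖ ≤ sum_l p_l ‖f(B_l)‖. Then λ(A) is weakly majorized by sum_l p_l λ(B_l). -/
open scoped BigOperators ComplexOrder

section Aux
open Matrix
open scoped Pointwise
variable {d : ℕ}

lemma card_filter_lt {k : ℕ} (hkd : k ≤ d) :
    (Finset.univ.filter (fun i : Fin d => (i : ℕ) < k)).card = k := by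
  rw [Finset.card_filter]
  rw [Fin.sum_univ_eq_sum_range (fun n => if n < k then 1 else 0) d]
  rw [← Finset.sum_filter]
  have : (Finset.range d).filter (· < k) = Finset.range k := by
    ext x; simp; omega
  rw [this, Finset.sum_const, Finset.card_range, smul_eq_mul, mul_one]

lemma unitary_row_sum {R : Matrix (Fin d) (Fin d) ℂ} (hR : R ∈ Matrix.unitaryGroup (Fin d) ℂ)
    (i : Fin d) : ∑ j, ‖R i j‖ ^ 2 = 1 := by
  have h := Matrix.mem_unitaryGroup_iff.mp hR
  have h2 := congrFun (congrFun h i) i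
  simp only [Matrix.mul_apply, Matrix.star_apply, RCLike.star_def, Matrix.one_apply_eq] at h2
  have h3 : ∀ j, R i j * (starRingEnd ℂ) (R i j) = ((‖R i j‖ ^ 2 : ℝ) : ℂ) := by
    intro j
    rw [Complex.mul_conj, Complex.normSq_eq_norm_sq]
  rw [Finset.sum_congr rfl (fun j _ => h3 j)] at h2
  exact_mod_cast h2

lemma unitary_col_sum {R : Matrix (Fin d) (Fin d) ℂ} (hR : R ∈ Matrix.unitaryGroup (Fin d) ℂ)
    (j : Fin d) : ∑ i, ‖R i j‖ ^ 2 = 1 := by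
  have h := Matrix.mem_unitaryGroup_iff'.mp hR
  have h2 := congrFun (congrFun h j) j
  simp only [Matrix.mul_apply, Matrix.star_apply, RCLike.star_def, Matrix.one_apply_eq] at h2
  have h3 : ∀ i, (starRingEnd ℂ) (R i j) * R i j = ((‖R i j‖ ^ 2 : ℝ) : ℂ) := by
    intro i
    rw [mul_comm, Complex.mul_conj, Complex.normSq_eq_norm_sq]
  rw [Finset.sum_congr rfl (fun i _ => h3 i)] at h2
  exact_mod_cast h2

lemma unitary_entry_le {R : Matrix (Fin d) (Fin d) ℂ} (hR : R ∈ Matrix.unitaryGroup (Fin d) ℂ)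
    (i j : Fin d) : ‖R i j‖ ≤ 1 := by
  have h := unitary_row_sum hR i
  have h2 : ‖R i j‖ ^ 2 ≤ 1 := by
    rw [← h]
    exact Finset.single_le_sum (f := fun j' => ‖R i j'‖ ^ 2) (fun j' _ => sq_nonneg _)
      (Finset.mem_univ j)
  nlinarith [norm_nonneg (R i j)]

/-- generalized permutation matrix -/
def gpm (σ : Equiv.Perm (Fin d)) (u : Fin d → ℂ) : Matrix (Fin d) (Fin d) ℂ :=
  Matrix.of fun i j => if j = σ i then u i else 0

lemma gpm_mem (σ : Equiv.Perm (Fin d)) (u : Fin d → ℂ) (hu : ∀ i, ‖u i‖ = 1) :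
    gpm σ u ∈ Matrix.unitaryGroup (Fin d) ℂ := by
  rw [Matrix.mem_unitaryGroup_iff]
  ext i j
  simp only [Matrix.mul_apply, gpm, Matrix.of_apply, Matrix.one_apply,
    Matrix.star_apply, RCLike.star_def]
  rw [Finset.sum_eq_single (σ i)]
  · by_cases h : i = j
    · subst h
      have h1 : u i * (starRingEnd ℂ) (u i) = ((‖u i‖ : ℝ) : ℂ) ^ 2 := by
        rw [Complex.mul_conj, Complex.normSq_eq_norm_sq]
        push_cast; ring
      simp [h1, hu i]
    · have h2 : σ i ≠ σ j := fun hc => h (σ.injective hc)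
      simp [if_neg h2, if_neg h]
  · intro b _ hb
    simp [if_neg hb]
  · simp

noncomputable def Pk (d k : ℕ) : Matrix (Fin d) (Fin d) ℂ :=
  Matrix.diagonal (fun i : Fin d => if (i : ℕ) < k then (1:ℂ) else 0)

lemma trace_Pk_mul (k : ℕ) (M : Matrix (Fin d) (Fin d) ℂ) :
    (Pk d k * M).trace = ∑ i ∈ Finset.univ.filter (fun i : Fin d => (i : ℕ) < k), M i i := by
  rw [Matrix.trace]
  simp only [Matrix.diag_apply, Pk, Matrix.diagonal_mul]
  rw [Finset.sum_filter]
  congr 1; ext i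
  by_cases h : (i : ℕ) < k <;> simp [h]

lemma gpm_triple_diag (σ τ : Equiv.Perm (Fin d)) (v : Fin d → ℂ)
    (X : Matrix (Fin d) (Fin d) ℂ) (i : Fin d) :
    ((gpm σ 1) * X * (gpm τ v)ᴴ) i i = X (σ i) (τ i) * star (v i) := by
  simp only [Matrix.mul_apply, Matrix.conjTranspose_apply, gpm, Matrix.of_apply]
  rw [Finset.sum_eq_single (τ i)]
  · rw [if_pos rfl]
    congr 1
    rw [Finset.sum_eq_single (σ i)]
    · simp
    · intro b _ hb; simp [if_neg hb]
    · simp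
  · intro b _ hb
    simp [if_neg hb]
  · simp

def KFset (k : ℕ) (X : Matrix (Fin d) (Fin d) ℂ) : Set ℝ :=
  {r | ∃ U V, U ∈ Matrix.unitaryGroup (Fin d) ℂ ∧ V ∈ Matrix.unitaryGroup (Fin d) ℂ ∧
    r = ‖(Pk d k * (U * X * V)).trace‖}

noncomputable def KF (k : ℕ) (X : Matrix (Fin d) (Fin d) ℂ) : ℝ := sSup (KFset k X)

lemma mem_KFset (k : ℕ) (X U V : Matrix (Fin d) (Fin d) ℂ)
    (hU : U ∈ Matrix.unitaryGroup (Fin d) ℂ) (hV : V ∈ Matrix.unitaryGroup (Fin d) ℂ) :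
    ‖(Pk d k * (U * X * V)).trace‖ ∈ KFset k X := ⟨U, V, hU, hV, rfl⟩

lemma KFset_nonempty (k : ℕ) (X : Matrix (Fin d) (Fin d) ℂ) : (KFset k X).Nonempty :=
  ⟨_, mem_KFset k X 1 1 (one_mem _) (one_mem _)⟩

lemma KFset_bddAbove (k : ℕ) (X : Matrix (Fin d) (Fin d) ℂ) : BddAbove (KFset k X) := by
  refine ⟨(d : ℝ) * ∑ a, ∑ b, ‖X a b‖, ?_⟩
  rintro r ⟨U, V, hU, hV, rfl⟩
  have hXnn : (0:ℝ) ≤ ∑ a, ∑ b, ‖X a b‖ :=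
    Finset.sum_nonneg fun a _ => Finset.sum_nonneg fun b _ => norm_nonneg _
  have hdiag : ∀ i : Fin d, ‖(U * X * V) i i‖ ≤ ∑ a, ∑ b, ‖X a b‖ := by
    intro i
    have h1 : (U * X * V) i i = ∑ b, (U * X) i b * V b i := Matrix.mul_apply
    calc ‖(U * X * V) i i‖ ≤ ∑ b, ‖(U * X) i b * V b i‖ := by
          rw [h1]; exact norm_sum_le _ _
      _ ≤ ∑ b, ‖(U * X) i b‖ := by
          refine Finset.sum_le_sum fun b _ => ?_
          rw [norm_mul]
          exact mul_le_of_le_one_right (norm_nonneg _) (unitary_entry_le hV b i)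
      _ ≤ ∑ b, ∑ a, ‖X a b‖ := by
          refine Finset.sum_le_sum fun b _ => ?_
          calc ‖∑ a, U i a * X a b‖ ≤ ∑ a, ‖U i a * X a b‖ := norm_sum_le _ _
            _ ≤ ∑ a, ‖X a b‖ := by
                refine Finset.sum_le_sum fun a _ => ?_
                rw [norm_mul]
                exact mul_le_of_le_one_left (norm_nonneg _) (unitary_entry_le hU i a)
      _ = ∑ a, ∑ b, ‖X a b‖ := Finset.sum_comm
  rw [trace_Pk_mul]
  calc ‖∑ i ∈ Finset.univ.filter (fun i : Fin d => (i : ℕ) < k), (U * X * V) i i‖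
      ≤ ∑ i ∈ Finset.univ.filter (fun i : Fin d => (i : ℕ) < k), ‖(U * X * V) i i‖ :=
        norm_sum_le _ _
    _ ≤ ∑ i : Fin d, ‖(U * X * V) i i‖ :=
        Finset.sum_le_sum_of_subset_of_nonneg (Finset.filter_subset _ _)
          (fun i _ _ => norm_nonneg _)
    _ ≤ ∑ _i : Fin d, ∑ a, ∑ b, ‖X a b‖ := Finset.sum_le_sum fun i _ => hdiag i
    _ = (d : ℝ) * ∑ a, ∑ b, ‖X a b‖ := by
        rw [Finset.sum_const, Finset.card_univ, Fintype.card_fin, nsmul_eq_mul]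

lemma KF_add_le (k : ℕ) (X Y : Matrix (Fin d) (Fin d) ℂ) :
    KF k (X + Y) ≤ KF k X + KF k Y := by
  refine csSup_le (KFset_nonempty k _) ?_
  rintro r ⟨U, V, hU, hV, rfl⟩
  have h : U * (X + Y) * V = U * X * V + U * Y * V := by noncomm_ring
  rw [h, Matrix.mul_add, Matrix.trace_add]
  calc ‖(Pk d k * (U * X * V)).trace + (Pk d k * (U * Y * V)).trace‖
      ≤ ‖(Pk d k * (U * X * V)).trace‖ + ‖(Pk d k * (U * Y * V)).trace‖ := norm_add_le _ _
    _ ≤ KF k X + KF k Y := add_le_add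
        (le_csSup (KFset_bddAbove k X) (mem_KFset k X U V hU hV))
        (le_csSup (KFset_bddAbove k Y) (mem_KFset k Y U V hU hV))

lemma KFset_smul (k : ℕ) (c : ℂ) (X : Matrix (Fin d) (Fin d) ℂ) :
    KFset k (c • X) = ‖c‖ • KFset k X := by
  ext r
  constructor
  · rintro ⟨U, V, hU, hV, rfl⟩
    refine Set.mem_smul_set.mpr ⟨‖(Pk d k * (U * X * V)).trace‖, mem_KFset k X U V hU hV, ?_⟩
    have h : U * (c • X) * V = c • (U * X * V) := by
      rw [Matrix.mul_smul, Matrix.smul_mul]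
    rw [h, Matrix.mul_smul, Matrix.trace_smul, smul_eq_mul]
    exact (norm_smul c _).symm
  · rintro ⟨y, ⟨U, V, hU, hV, rfl⟩, rfl⟩
    refine ⟨U, V, hU, hV, ?_⟩
    have h : U * (c • X) * V = c • (U * X * V) := by
      rw [Matrix.mul_smul, Matrix.smul_mul]
    simp only [smul_eq_mul]
    rw [h, Matrix.mul_smul, Matrix.trace_smul]
    exact (norm_smul c ((Pk d k * (U * X * V)).trace)).symm

lemma KF_smul (k : ℕ) (c : ℂ) (X : Matrix (Fin d) (Fin d) ℂ) :
    KF k (c • X) = ‖c‖ * KF k X := by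
  rw [KF, KFset_smul, Real.sSup_smul_of_nonneg (norm_nonneg c), smul_eq_mul, KF]

lemma KFset_unitary (k : ℕ) (U₀ V₀ X : Matrix (Fin d) (Fin d) ℂ)
    (hU₀ : U₀ ∈ Matrix.unitaryGroup (Fin d) ℂ) (hV₀ : V₀ ∈ Matrix.unitaryGroup (Fin d) ℂ) :
    KFset k (U₀ * X * V₀) = KFset k X := by
  ext r
  constructor
  · rintro ⟨U, V, hU, hV, rfl⟩
    refine ⟨U * U₀, V₀ * V, mul_mem hU hU₀, mul_mem hV₀ hV, ?_⟩
    have h : U * (U₀ * X * V₀) * V = U * U₀ * X * (V₀ * V) := by noncomm_ring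
    rw [h]
  · rintro ⟨U, V, hU, hV, rfl⟩
    refine ⟨U * star U₀, star V₀ * V, mul_mem hU (Unitary.star_mem hU₀),
      mul_mem (Unitary.star_mem hV₀) hV, ?_⟩
    have h1 : star U₀ * U₀ = 1 := Matrix.mem_unitaryGroup_iff'.mp hU₀
    have h2 : V₀ * star V₀ = 1 := Matrix.mem_unitaryGroup_iff.mp hV₀
    have h : U * star U₀ * (U₀ * X * V₀) * (star V₀ * V) = U * X * V := by
      calc U * star U₀ * (U₀ * X * V₀) * (star V₀ * V)
          = U * ((star U₀ * U₀) * X * (V₀ * star V₀)) * V := by noncomm_ring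
        _ = U * X * V := by rw [h1, h2, Matrix.one_mul, Matrix.mul_one]
    rw [h]

lemma KF_unitary (k : ℕ) (U₀ V₀ X : Matrix (Fin d) (Fin d) ℂ)
    (hU₀ : U₀ ∈ Matrix.unitaryGroup (Fin d) ℂ) (hV₀ : V₀ ∈ Matrix.unitaryGroup (Fin d) ℂ) :
    KF k (U₀ * X * V₀) = KF k X := by
  rw [KF, KFset_unitary k U₀ V₀ X hU₀ hV₀, KF]

lemma KF_pos {k : ℕ} (hk : 0 < k) (X : Matrix (Fin d) (Fin d) ℂ) (hX : X ≠ 0) :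
    0 < KF k X := by
  have hex : ∃ a b, X a b ≠ 0 := by
    by_contra h
    push_neg at h
    exact hX (by ext a b; simpa using h a b)
  obtain ⟨a, b, hab⟩ := hex
  set i0 : Fin d := ⟨0, a.pos⟩ with hi0
  set σ := Equiv.swap i0 a with hσ
  set τ := Equiv.swap i0 b with hτ
  set w : Fin d → ℂ := fun i => X (σ i) (τ i) with hw
  set v : Fin d → ℂ := fun i => if w i = 0 then 1 else w i / (‖w i‖ : ℂ) with hv
  have hv1 : ∀ i, ‖v i‖ = 1 := by
    intro i
    by_cases h : w i = 0
    · simp [hv, h]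
    · simp only [hv, if_neg h]
      rw [norm_div, Complex.norm_real, norm_norm]
      exact div_self (ne_of_gt (norm_pos_iff.mpr h))
  have hterm : ∀ i, w i * star (v i) = ((‖w i‖ : ℝ) : ℂ) := by
    intro i
    by_cases h : w i = 0
    · simp [h]
    · have hne : ((‖w i‖ : ℝ) : ℂ) ≠ 0 := by
        simp only [ne_eq, Complex.ofReal_eq_zero, norm_eq_zero]
        exact h
      simp only [hv, if_neg h, RCLike.star_def, map_div₀, Complex.conj_ofReal]
      rw [mul_div_assoc', div_eq_iff hne, Complex.mul_conj, Complex.normSq_eq_norm_sq]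
      push_cast
      ring
  have hUmem : gpm σ 1 ∈ Matrix.unitaryGroup (Fin d) ℂ := gpm_mem σ 1 (by simp)
  have hVmem : (gpm τ v)ᴴ ∈ Matrix.unitaryGroup (Fin d) ℂ := by
    rw [← Matrix.star_eq_conjTranspose]
    exact Unitary.star_mem (gpm_mem τ v hv1)
  have htr : (Pk d k * (gpm σ 1 * X * (gpm τ v)ᴴ)).trace =
      ((∑ i ∈ Finset.univ.filter (fun i : Fin d => (i : ℕ) < k), ‖w i‖ : ℝ) : ℂ) := by
    rw [trace_Pk_mul]
    push_cast
    refine Finset.sum_congr rfl fun i _ => ?_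
    rw [gpm_triple_diag]
    exact hterm i
  have hval : ‖(Pk d k * (gpm σ 1 * X * (gpm τ v)ᴴ)).trace‖ =
      ∑ i ∈ Finset.univ.filter (fun i : Fin d => (i : ℕ) < k), ‖w i‖ := by
    rw [htr, Complex.norm_real, Real.norm_eq_abs, abs_of_nonneg]
    exact Finset.sum_nonneg fun i _ => norm_nonneg _
  have hi0mem : i0 ∈ Finset.univ.filter (fun i : Fin d => (i : ℕ) < k) := by
    simp [hi0, hk]
  have hlow : ‖X a b‖ ≤ ∑ i ∈ Finset.univ.filter (fun i : Fin d => (i : ℕ) < k), ‖w i‖ := by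
    have : ‖w i0‖ = ‖X a b‖ := by
      rw [hw]
      simp [hσ, hτ, Equiv.swap_apply_left]
    rw [← this]
    exact Finset.single_le_sum (f := fun i => ‖w i‖) (fun i _ => norm_nonneg _) hi0mem
  have hpos : (0:ℝ) < ‖X a b‖ := norm_pos_iff.mpr hab
  have hle : ‖(Pk d k * (gpm σ 1 * X * (gpm τ v)ᴴ)).trace‖ ≤ KF k X :=
    le_csSup (KFset_bddAbove k X) (mem_KFset k X _ _ hUmem hVmem)
  rw [hval] at hle
  linarith

lemma eigDesc_antitone {A : Matrix (Fin d) (Fin d) ℂ} (hA : A.IsHermitian) :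
    Antitone (eigDesc hA) :=
  fun i j hij => Tuple.monotone_sort hA.eigenvalues (Fin.rev_le_rev.mpr hij)

lemma comb_aux {k : ℕ} (hk0 : 0 < k) (hkd : k ≤ d) (ν : Fin d → ℝ) (hmono : Antitone ν)
    (hν0 : ∀ i, 0 ≤ ν i) (e : Fin d → ℝ) (he0 : ∀ i, 0 ≤ e i) (he1 : ∀ i, e i ≤ 1)
    (hesum : ∑ i, e i ≤ k) :
    ∑ i, ν i * e i ≤ ∑ i ∈ Finset.univ.filter (fun i : Fin d => (i : ℕ) < k), ν i := by
  have hkm : k - 1 < d := by omega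
  set km : Fin d := ⟨k - 1, hkm⟩ with hkmdef
  set t := ν km with htdef
  have ht0 : 0 ≤ t := hν0 km
  have hterm : ∀ i, ν i * e i ≤ max (ν i - t) 0 + t * e i := by
    intro i
    rcases le_or_gt t (ν i) with h | h
    · have h1 : (ν i - t) * e i ≤ ν i - t := by nlinarith [he0 i, he1 i]
      have h2 : ν i - t ≤ max (ν i - t) 0 := le_max_left _ _
      nlinarith
    · have h1 : ν i * e i ≤ t * e i := mul_le_mul_of_nonneg_right (le_of_lt h) (he0 i)
      have h2 : (0:ℝ) ≤ max (ν i - t) 0 := le_max_right _ _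
      linarith
  have h1 : ∑ i, ν i * e i ≤ ∑ i, max (ν i - t) 0 + ∑ i, t * e i := by
    rw [← Finset.sum_add_distrib]
    exact Finset.sum_le_sum fun i _ => hterm i
  have h2 : ∑ i, max (ν i - t) 0 =
      ∑ i ∈ Finset.univ.filter (fun i : Fin d => (i : ℕ) < k), (ν i - t) := by
    rw [← Finset.sum_filter_add_sum_filter_not Finset.univ (fun i : Fin d => (i : ℕ) < k)
      (fun i => max (ν i - t) 0)]
    have hA : ∀ i ∈ Finset.univ.filter (fun i : Fin d => (i : ℕ) < k),
        max (ν i - t) 0 = ν i - t := by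
      intro i hi
      simp only [Finset.mem_filter] at hi
      have hile : i ≤ km := by
        rw [Fin.le_def]; simp only [hkmdef]; omega
      exact max_eq_left (sub_nonneg.mpr (hmono hile))
    have hBz : ∀ i ∈ Finset.univ.filter (fun i : Fin d => ¬ ((i : ℕ) < k)),
        max (ν i - t) 0 = 0 := by
      intro i hi
      simp only [Finset.mem_filter] at hi
      have hile : km ≤ i := by
        rw [Fin.le_def]; simp only [hkmdef]; omega
      exact max_eq_right (sub_nonpos.mpr (hmono hile))
    rw [Finset.sum_congr rfl hA, Finset.sum_congr rfl hBz, Finset.sum_const_zero, add_zero]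
  have h3 : ∑ i ∈ Finset.univ.filter (fun i : Fin d => (i : ℕ) < k), (ν i - t) =
      (∑ i ∈ Finset.univ.filter (fun i : Fin d => (i : ℕ) < k), ν i) - k * t := by
    rw [Finset.sum_sub_distrib, Finset.sum_const, card_filter_lt hkd, nsmul_eq_mul]
  have h4 : ∑ i, t * e i ≤ t * k := by
    rw [← Finset.mul_sum]
    exact mul_le_mul_of_nonneg_left hesum ht0
  linarith

-- THE LOWER BOUND
lemma le_KF_herFun {k : ℕ} {A : Matrix (Fin d) (Fin d) ℂ} (hA : A.IsHermitian)
    (f : ℝ → ℝ) (hf0 : ∀ x, 0 ≤ f x) :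
    ∑ i ∈ Finset.univ.filter (fun i : Fin d => (i : ℕ) < k), f (eigDesc hA i) ≤
      KF k (herFun hA f) := by
  set W := (hA.eigenvectorUnitary : Matrix (Fin d) (Fin d) ℂ) with hWdef
  have hW : W ∈ Matrix.unitaryGroup (Fin d) ℂ := hA.eigenvectorUnitary.2
  have hW1 : star W * W = 1 := Matrix.mem_unitaryGroup_iff'.mp hW
  set ρ : Equiv.Perm (Fin d) := Fin.revPerm.trans (Tuple.sort hA.eigenvalues) with hρdef
  set G : Matrix (Fin d) (Fin d) ℂ := gpm ρ 1 with hGdef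
  have hG : G ∈ Matrix.unitaryGroup (Fin d) ℂ := gpm_mem ρ 1 (by simp)
  set Dμ := Matrix.diagonal (fun i => ((f (hA.eigenvalues i) : ℝ) : ℂ)) with hDdef
  set U₀ := G * star W with hU₀
  set V₀ := W * Gᴴ with hV₀
  have hU₀m : U₀ ∈ Matrix.unitaryGroup (Fin d) ℂ := mul_mem hG (Unitary.star_mem hW)
  have hV₀m : V₀ ∈ Matrix.unitaryGroup (Fin d) ℂ := by
    rw [hV₀, ← Matrix.star_eq_conjTranspose]
    exact mul_mem hW (Unitary.star_mem hG)
  have key : U₀ * herFun hA f * V₀ = G * Dμ * Gᴴ := by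
    have inner : star W * (W * (Dμ * (star W * (W * Gᴴ)))) = Dμ * Gᴴ := by
      rw [← Matrix.mul_assoc (star W) W, hW1, Matrix.one_mul,
        ← Matrix.mul_assoc (star W) W, hW1, Matrix.one_mul]
    calc U₀ * herFun hA f * V₀
        = G * (star W * (W * (Dμ * (star W * (W * Gᴴ))))) := by
          rw [hU₀, hV₀, herFun]
          simp only [Matrix.mul_assoc]
          rfl
      _ = G * (Dμ * Gᴴ) := by rw [inner]
      _ = G * Dμ * Gᴴ := by rw [Matrix.mul_assoc]
  have htr : (Pk d k * (U₀ * herFun hA f * V₀)).trace =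
      ((∑ i ∈ Finset.univ.filter (fun i : Fin d => (i : ℕ) < k), f (eigDesc hA i) : ℝ) : ℂ) := by
    rw [key, trace_Pk_mul]
    push_cast
    refine Finset.sum_congr rfl fun i _ => ?_
    rw [hGdef, gpm_triple_diag ρ ρ 1 Dμ i, hDdef]
    simp [Matrix.diagonal_apply_eq]
    rfl
  have hmem : ‖(Pk d k * (U₀ * herFun hA f * V₀)).trace‖ ∈ KFset k (herFun hA f) :=
    mem_KFset k _ U₀ V₀ hU₀m hV₀m
  have hval : ‖(Pk d k * (U₀ * herFun hA f * V₀)).trace‖ =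
      ∑ i ∈ Finset.univ.filter (fun i : Fin d => (i : ℕ) < k), f (eigDesc hA i) := by
    rw [htr, Complex.norm_real, Real.norm_eq_abs, abs_of_nonneg]
    exact Finset.sum_nonneg fun i _ => hf0 _
  rw [← hval]
  exact le_csSup (KFset_bddAbove k _) hmem

-- THE UPPER BOUND
lemma KF_herFun_le {k : ℕ} (hk0 : 0 < k) (hkd : k ≤ d)
    {Bm : Matrix (Fin d) (Fin d) ℂ} (hBm : Bm.IsHermitian)
    (f : ℝ → ℝ) (hfm : Monotone f) (hf0 : ∀ x, 0 ≤ f x) :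
    KF k (herFun hBm f) ≤
      ∑ i ∈ Finset.univ.filter (fun i : Fin d => (i : ℕ) < k), f (eigDesc hBm i) := by
  refine csSup_le (KFset_nonempty _ _) ?_
  rintro r ⟨U, V, hU, hV, rfl⟩
  set W := (hBm.eigenvectorUnitary : Matrix (Fin d) (Fin d) ℂ) with hWdef
  have hW : W ∈ Matrix.unitaryGroup (Fin d) ℂ := hBm.eigenvectorUnitary.2
  set μ : Fin d → ℝ := fun i => f (hBm.eigenvalues i) with hμdef
  set Dμ := Matrix.diagonal (fun i => ((μ i : ℝ) : ℂ)) with hDdef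
  set R := star W * V with hRdef
  set Q := U * W with hQdef
  have hR : R ∈ Matrix.unitaryGroup (Fin d) ℂ := mul_mem (Unitary.star_mem hW) hV
  have hQ : Q ∈ Matrix.unitaryGroup (Fin d) ℂ := mul_mem hU hW
  set C := R * (Pk d k * Q) with hCdef
  -- trace identity
  have htr : (Pk d k * (U * herFun hBm f * V)).trace = (C * Dμ).trace := by
    have h1 : Pk d k * (U * herFun hBm f * V) = (Pk d k * Q) * Dμ * R := by
      rw [herFun, hQdef, hRdef]
      simp only [Matrix.mul_assoc]
      rfl
    rw [h1, Matrix.trace_mul_comm (Pk d k * Q * Dμ) R, hCdef, ← Matrix.mul_assoc]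
  have htr2 : (C * Dμ).trace = ∑ i, C i i * ((μ i : ℝ) : ℂ) := by
    rw [Matrix.trace]
    refine Finset.sum_congr rfl fun i _ => ?_
    rw [Matrix.diag_apply, hDdef, Matrix.mul_diagonal]
  -- diagonal entries of C
  have hCii : ∀ i, C i i = ∑ j, R i j * ((if (j : ℕ) < k then (1:ℂ) else 0) * Q j i) := by
    intro i
    rw [hCdef, Matrix.mul_apply]
    refine Finset.sum_congr rfl fun j _ => ?_
    rw [Pk, Matrix.diagonal_mul]
  set e : Fin d → ℝ :=
    fun i => ∑ j : Fin d, (if (j : ℕ) < k then (‖R i j‖^2 + ‖Q j i‖^2)/2 else 0) with hedef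
  have hCe : ∀ i, ‖C i i‖ ≤ e i := by
    intro i
    rw [hCii i]
    simp only [hedef]
    calc ‖∑ j, R i j * ((if (j : ℕ) < k then (1:ℂ) else 0) * Q j i)‖
        ≤ ∑ j, ‖R i j * ((if (j : ℕ) < k then (1:ℂ) else 0) * Q j i)‖ := norm_sum_le _ _
      _ ≤ ∑ j : Fin d, (if (j : ℕ) < k then (‖R i j‖^2 + ‖Q j i‖^2)/2 else 0) := by
          refine Finset.sum_le_sum fun j _ => ?_
          by_cases h : (j : ℕ) < k
          · simp only [if_pos h, one_mul]
            rw [norm_mul]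
            nlinarith [norm_nonneg (R i j), norm_nonneg (Q j i), sq_nonneg (‖R i j‖ - ‖Q j i‖)]
          · simp [if_neg h]
  have he0k : ∀ i j : Fin d, (0:ℝ) ≤ (if (j : ℕ) < k then (‖R i j‖^2 + ‖Q j i‖^2)/2 else 0) := by
    intro i j
    by_cases h : (j : ℕ) < k
    · simp only [if_pos h]; positivity
    · simp [if_neg h]
  have he1 : ∀ i, e i ≤ 1 := by
    intro i
    have h1 : e i ≤ ∑ j : Fin d, (‖R i j‖^2 + ‖Q j i‖^2)/2 := by
      simp only [hedef]
      refine Finset.sum_le_sum fun j _ => ?_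
      by_cases h : (j : ℕ) < k
      · simp [if_pos h]
      · simp only [if_neg h]; positivity
    have h2 : ∑ j : Fin d, (‖R i j‖^2 + ‖Q j i‖^2)/2 = 1 := by
      rw [show (fun j => (‖R i j‖^2 + ‖Q j i‖^2)/2) = fun j => (‖R i j‖^2)/2 + (‖Q j i‖^2)/2
        from funext fun j => by ring]
      rw [Finset.sum_add_distrib, ← Finset.sum_div, ← Finset.sum_div,
        unitary_row_sum hR i, unitary_col_sum hQ i]
      norm_num
    linarith
  have hesum : ∑ i, e i ≤ (k : ℝ) := by
    simp only [hedef]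
    rw [Finset.sum_comm]
    have hcol : ∀ j : Fin d, (∑ i, if (j : ℕ) < k then (‖R i j‖^2 + ‖Q j i‖^2)/2 else 0) =
        (if (j : ℕ) < k then (1:ℝ) else 0) := by
      intro j
      by_cases h : (j : ℕ) < k
      · simp only [if_pos h]
        rw [show (fun i => (‖R i j‖^2 + ‖Q j i‖^2)/2) = fun i => (‖R i j‖^2)/2 + (‖Q j i‖^2)/2
          from funext fun i => by ring]
        rw [Finset.sum_add_distrib, ← Finset.sum_div, ← Finset.sum_div,
          unitary_col_sum hR j, unitary_row_sum hQ j]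
        norm_num
      · simp [if_neg h]
    rw [Finset.sum_congr rfl fun j _ => hcol j, ← Finset.sum_filter,
      Finset.sum_const, card_filter_lt hkd, nsmul_eq_mul, mul_one]
  -- assemble
  set ρ : Equiv.Perm (Fin d) := Fin.revPerm.trans (Tuple.sort hBm.eigenvalues) with hρdef
  have heig : ∀ i, eigDesc hBm i = hBm.eigenvalues (ρ i) := fun i => rfl
  calc ‖(Pk d k * (U * herFun hBm f * V)).trace‖
      = ‖∑ i, C i i * ((μ i : ℝ) : ℂ)‖ := by rw [htr, htr2]
    _ ≤ ∑ i, ‖C i i * ((μ i : ℝ) : ℂ)‖ := norm_sum_le _ _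
    _ = ∑ i, μ i * ‖C i i‖ := by
        refine Finset.sum_congr rfl fun i _ => ?_
        rw [norm_mul, Complex.norm_real, Real.norm_eq_abs, abs_of_nonneg (hf0 _), mul_comm]
    _ = ∑ i, μ (ρ i) * ‖C (ρ i) (ρ i)‖ := (Equiv.sum_comp ρ (fun i => μ i * ‖C i i‖)).symm
    _ ≤ ∑ i ∈ Finset.univ.filter (fun i : Fin d => (i : ℕ) < k), μ (ρ i) := by
        refine comb_aux hk0 hkd (fun i => μ (ρ i)) ?_ (fun i => hf0 _)
          (fun i => ‖C (ρ i) (ρ i)‖) (fun i => norm_nonneg _)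
          (fun i => le_trans (hCe (ρ i)) (he1 (ρ i))) ?_
        · intro i j hij
          exact hfm ((eigDesc_antitone hBm) hij)
        · calc ∑ i, ‖C (ρ i) (ρ i)‖ = ∑ i, ‖C i i‖ := Equiv.sum_comp ρ (fun i => ‖C i i‖)
            _ ≤ ∑ i, e i := Finset.sum_le_sum fun i _ => hCe i
            _ ≤ (k : ℝ) := hesum
    _ = ∑ i ∈ Finset.univ.filter (fun i : Fin d => (i : ℕ) < k), f (eigDesc hBm i) := by
        refine Finset.sum_congr rfl fun i _ => ?_
        rw [heig i, hμdef]

end Aux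

/-- **Theorem 3.1, (b) ⇒ (a), discrete case.** If, for self-adjoint `A, B l` and weights
`p l ≥ 0` summing to `1`, the inequality `N (f(A)) ≤ ∑ l, p l * N (f(B l))` holds for
every non-decreasing convex `f : ℝ → [0,∞)` and every unitarily invariant norm `N`,
then `λ(A) ≺_w ∑ l, p l • λ(B l)`. -/
theorem norm_ineq_implies_weak_majorization_average
    {d m : ℕ} {A : Matrix (Fin d) (Fin d) ℂ} (hA : A.IsHermitian)
    {B : Fin m → Matrix (Fin d) (Fin d) ℂ} (hB : ∀ l, (B l).IsHermitian)
    (p : Fin m → ℝ) (hp : ∀ l, 0 ≤ p l) (hp_sum : ∑ l, p l = 1)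
    (hnorm : ∀ f : ℝ → ℝ, Monotone f → ConvexOn ℝ Set.univ f → (∀ x, 0 ≤ f x) →
      ∀ Φ : UINorm d, Φ.N (herFun hA f) ≤ ∑ l, p l * Φ.N (herFun (hB l) f)) :
    ∀ k, k ≤ d →
      ∑ i ∈ Finset.univ.filter (fun i : Fin d => (i : ℕ) < k), eigDesc hA i ≤
      ∑ i ∈ Finset.univ.filter (fun i : Fin d => (i : ℕ) < k), ∑ l, p l * eigDesc (hB l) i := by
  intro k hkd
  rcases Nat.eq_zero_or_pos k with rfl | hk0
  · simp
  have hm : 0 < m := by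
    by_contra h
    push_neg at h
    have hm0 : m = 0 := by omega
    subst hm0
    simp at hp_sum
  have hkm : k - 1 < d := by omega
  set km : Fin d := ⟨k - 1, hkm⟩ with hkmdef
  have hne : (Finset.univ : Finset (Fin m)).Nonempty := ⟨⟨0, hm⟩, Finset.mem_univ _⟩
  set t₀ : ℝ := Finset.univ.inf' hne (fun l => eigDesc (hB l) km) with ht₀
  set f : ℝ → ℝ := fun x => max (x - t₀) 0 with hfdef
  have hfmono : Monotone f := fun x y hxy => max_le_max (by linarith) le_rfl
  have hf0 : ∀ x, 0 ≤ f x := fun x => le_max_right _ _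
  have hfconv : ConvexOn ℝ Set.univ f := by
    refine ⟨convex_univ, fun x _ y _ a b ha hb hab => ?_⟩
    simp only [hfdef, smul_eq_mul]
    refine max_le ?_ ?_
    · have h1 : a * (x - t₀) ≤ a * max (x - t₀) 0 :=
        mul_le_mul_of_nonneg_left (le_max_left _ _) ha
      have h2 : b * (y - t₀) ≤ b * max (y - t₀) 0 :=
        mul_le_mul_of_nonneg_left (le_max_left _ _) hb
      have hab' : a * t₀ + b * t₀ = t₀ := by rw [← add_mul, hab, one_mul]
      linarith
    · exact add_nonneg (mul_nonneg ha (le_max_right _ _)) (mul_nonneg hb (le_max_right _ _))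
  have hmain : KF k (herFun hA f) ≤ ∑ l, p l * KF k (herFun (hB l) f) :=
    hnorm f hfmono hfconv hf0
      ⟨KF k, KF_add_le k, KF_smul k, fun X hX => KF_pos hk0 X hX,
        fun U V X hU hV => KF_unitary k U V X hU hV⟩
  have hlow := le_KF_herFun (k := k) hA f hf0
  have hup : ∀ l, KF k (herFun (hB l) f) ≤
      ∑ i ∈ Finset.univ.filter (fun i : Fin d => (i : ℕ) < k), f (eigDesc (hB l) i) :=
    fun l => KF_herFun_le hk0 hkd (hB l) f hfmono hf0
  have hBt : ∀ l : Fin m, ∀ i ∈ Finset.univ.filter (fun i : Fin d => (i : ℕ) < k),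
      f (eigDesc (hB l) i) = eigDesc (hB l) i - t₀ := by
    intro l i hi
    simp only [Finset.mem_filter] at hi
    have h1 : t₀ ≤ eigDesc (hB l) km :=
      Finset.inf'_le (fun l => eigDesc (hB l) km) (Finset.mem_univ l)
    have h2 : eigDesc (hB l) km ≤ eigDesc (hB l) i := by
      refine eigDesc_antitone (hB l) ?_
      rw [Fin.le_def]
      simp only [hkmdef]
      omega
    simp only [hfdef]
    exact max_eq_left (by linarith)
  have hcard := card_filter_lt (d := d) hkd
  have hupB : ∀ l : Fin m,
      ∑ i ∈ Finset.univ.filter (fun i : Fin d => (i : ℕ) < k), f (eigDesc (hB l) i) =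
      (∑ i ∈ Finset.univ.filter (fun i : Fin d => (i : ℕ) < k), eigDesc (hB l) i) - k * t₀ := by
    intro l
    rw [Finset.sum_congr rfl (hBt l), Finset.sum_sub_distrib, Finset.sum_const, hcard,
      nsmul_eq_mul]
  calc ∑ i ∈ Finset.univ.filter (fun i : Fin d => (i : ℕ) < k), eigDesc hA i
      ≤ ∑ i ∈ Finset.univ.filter (fun i : Fin d => (i : ℕ) < k), (t₀ + f (eigDesc hA i)) := by
        refine Finset.sum_le_sum fun i _ => ?_
        have := le_max_left (eigDesc hA i - t₀) 0
        simp only [hfdef]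
        linarith
    _ = k * t₀ + ∑ i ∈ Finset.univ.filter (fun i : Fin d => (i : ℕ) < k), f (eigDesc hA i) := by
        rw [Finset.sum_add_distrib, Finset.sum_const, hcard, nsmul_eq_mul, mul_comm]
    _ ≤ k * t₀ + KF k (herFun hA f) := by linarith
    _ ≤ k * t₀ + ∑ l, p l * KF k (herFun (hB l) f) := by linarith
    _ ≤ k * t₀ + ∑ l, p l *
          ((∑ i ∈ Finset.univ.filter (fun i : Fin d => (i : ℕ) < k), eigDesc (hB l) i)
            - k * t₀) := by
        refine add_le_add le_rfl (Finset.sum_le_sum fun l _ => ?_)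
        refine mul_le_mul_of_nonneg_left ?_ (hp l)
        rw [← hupB l]
        exact hup l
    _ = ∑ l, p l * ∑ i ∈ Finset.univ.filter (fun i : Fin d => (i : ℕ) < k),
          eigDesc (hB l) i := by
        have hexp : ∀ l : Fin m, p l *
            ((∑ i ∈ Finset.univ.filter (fun i : Fin d => (i : ℕ) < k), eigDesc (hB l) i)
              - k * t₀) =
            p l * (∑ i ∈ Finset.univ.filter (fun i : Fin d => (i : ℕ) < k), eigDesc (hB l) i)
              - (k * t₀) * p l := fun l => by ring
        rw [Finset.sum_congr rfl (fun l _ => hexp l), Finset.sum_sub_distrib,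
          ← Finset.mul_sum, hp_sum]
        ring
    _ = ∑ i ∈ Finset.univ.filter (fun i : Fin d => (i : ℕ) < k), ∑ l, p l * eigDesc (hB l) i := by
        rw [Finset.sum_comm]
        exact Finset.sum_congr rfl fun l _ => Finset.mul_sum _ _ _
end

section
/- Let a, b in R^d_+ have entries in decreasing order with a log-majorized by b, and suppose b^{(m)} in R^d_+ are vectors with strictly positive entries in decreasing order decreasing to b as m → ∞. Then there exist m_0 and vectors a^{(m)} in R^d_+ for m ≥ m_0 with strictly positive entries in decreasing order such that a^{(m)} → a, a ≤ a^{(m)} entrywise, and a^{(m)} is log-majorized by b^{(m)} for all m ≥ m_0. -/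
open scoped BigOperators
open Finset Filter

private def extAux {d : ℕ} (f : Fin d → ℝ) (j : ℕ) : ℝ := if h : j < d then f ⟨j, h⟩ else 1

private lemma extAux_lt {d : ℕ} (f : Fin d → ℝ) {j : ℕ} (h : j < d) :
    extAux f j = f ⟨j, h⟩ := dif_pos h

private lemma filter_prod_eq_range {d : ℕ} (f : Fin d → ℝ) {k : ℕ} (hk : k ≤ d) :
    ∏ i ∈ Finset.univ.filter (fun i : Fin d => (i : ℕ) < k), f i
      = ∏ j ∈ Finset.range k, extAux f j := by
  refine Finset.prod_bij' (fun i _ => (i : ℕ))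
    (fun j hj => ⟨j, lt_of_lt_of_le (Finset.mem_range.mp hj) hk⟩) ?_ ?_ ?_ ?_ ?_
  · intro i hi
    simp only [Finset.mem_filter, Finset.mem_univ, true_and] at hi
    exact Finset.mem_range.mpr hi
  · intro j hj
    simp only [Finset.mem_filter, Finset.mem_univ, true_and]
    exact Finset.mem_range.mp hj
  · intro i _; rfl
  · intro j _; rfl
  · intro i _
    rw [extAux_lt f i.isLt]

private lemma fin_prod_eq_range {d : ℕ} (f : Fin d → ℝ) :
    ∏ i, f i = ∏ j ∈ Finset.range d, extAux f j := by
  rw [← Fin.prod_univ_eq_prod_range (fun j => extAux f j) d]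
  exact Finset.prod_congr rfl (fun i _ => (extAux_lt f i.isLt).symm)

private lemma key_ineq (x : ℕ → ℝ) (J k d : ℕ) (hJk : J < k) (hkd : k < d)
    (hxpos : ∀ j, 0 < x j)
    (hxdec : ∀ i j : ℕ, i ≤ j → j < d → x j ≤ x i)
    (AJ : ℝ) (hAJ : 0 < AJ) (hAJle : AJ ≤ ∏ j ∈ Finset.range J, x j) :
    AJ ^ (d - k) * (∏ j ∈ Finset.range d, x j) ^ (k - J)
      ≤ (∏ j ∈ Finset.range k, x j) ^ (d - J) := by
  set p := k - J with hp
  set q := d - k with hq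
  set Bk := ∏ j ∈ Finset.range k, x j with hBk
  set T := ∏ j ∈ Finset.Ico k d, x j with hT
  set M := ∏ j ∈ Finset.Ico J k, x j with hM
  set BJ := ∏ j ∈ Finset.range J, x j with hBJ
  have hBd : ∏ j ∈ Finset.range d, x j = Bk * T :=
    (Finset.prod_range_mul_prod_Ico x hkd.le).symm
  have hBkM : Bk = BJ * M := (Finset.prod_range_mul_prod_Ico x hJk.le).symm
  have hk1 : k - 1 < d := by omega
  set c := x (k - 1) with hc
  have hcpos : 0 < c := hxpos _
  have hBkpos : 0 < Bk := Finset.prod_pos (fun j _ => hxpos j)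
  have hMpos : 0 < M := Finset.prod_pos (fun j _ => hxpos j)
  have hTpos : 0 < T := Finset.prod_pos (fun j _ => hxpos j)
  have hTle : T ≤ c ^ q := by
    have : T ≤ ∏ _j ∈ Finset.Ico k d, c := by
      refine Finset.prod_le_prod (fun j _ => (hxpos j).le) (fun j hj => ?_)
      rw [Finset.mem_Ico] at hj
      exact hxdec (k - 1) j (by omega) hj.2
    simpa [Nat.card_Ico] using this
  have hMge : c ^ p ≤ M := by
    have : (∏ _j ∈ Finset.Ico J k, c) ≤ M := by
      refine Finset.prod_le_prod (fun j _ => hcpos.le) (fun j hj => ?_)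
      rw [Finset.mem_Ico] at hj
      exact hxdec j (k - 1) (by omega) hk1
    simpa [Nat.card_Ico] using this
  have hdJ : d - J = p + q := by omega
  rw [hdJ, hBd]
  have h2 : AJ * c ^ p ≤ Bk := by
    calc AJ * c ^ p ≤ AJ * M := mul_le_mul_of_nonneg_left hMge hAJ.le
      _ ≤ BJ * M := mul_le_mul_of_nonneg_right hAJle hMpos.le
      _ = Bk := hBkM.symm
  calc AJ ^ q * (Bk * T) ^ p = Bk ^ p * (AJ ^ q * T ^ p) := by ring
    _ ≤ Bk ^ p * (AJ ^ q * (c ^ q) ^ p) := by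
        have h1 : T ^ p ≤ (c ^ q) ^ p := pow_le_pow_left₀ hTpos.le hTle p
        have := mul_le_mul_of_nonneg_left h1 (pow_nonneg hAJ.le q)
        exact mul_le_mul_of_nonneg_left this (pow_nonneg hBkpos.le p)
    _ = Bk ^ p * (AJ * c ^ p) ^ q := by ring
    _ ≤ Bk ^ p * Bk ^ q := by
        have := pow_le_pow_left₀ (by positivity) h2 q
        exact mul_le_mul_of_nonneg_left this (pow_nonneg hBkpos.le p)
    _ = Bk ^ (p + q) := (pow_add _ _ _).symm

/-- **Lemma 5.3.** Let `a, b ∈ ℝ^d_+` be in decreasing order with `a ≺_log b`, and let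
`b' m` be vectors with strictly positive entries in decreasing order decreasing
(entrywise, monotonically) to `b`.  Then there are `m₀` and vectors `a' m` (for `m ≥ m₀`)
with strictly positive entries in decreasing order such that `a' m → a`, `a ≤ a' m`
entrywise, and `a' m ≺_log b' m` for all `m ≥ m₀`. -/
theorem log_majorization_positive_approximation
    {d : ℕ} (a b : Fin d → ℝ)
    (ha_nonneg : ∀ i, 0 ≤ a i) (hb_nonneg : ∀ i, 0 ≤ b i)
    (ha_dec : Antitone a) (hb_dec : Antitone b)
    (hlogmaj : (∀ k, k ≤ d →
        ∏ i ∈ Finset.univ.filter (fun i : Fin d => (i : ℕ) < k), a i ≤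
        ∏ i ∈ Finset.univ.filter (fun i : Fin d => (i : ℕ) < k), b i) ∧
      ∏ i, a i = ∏ i, b i)
    (b' : ℕ → Fin d → ℝ)
    (hb'_pos : ∀ m i, 0 < b' m i)
    (hb'_dec : ∀ m, Antitone (b' m))
    (hb'_mono : ∀ i, Antitone (fun m => b' m i))
    (hb'_lim : ∀ i, Filter.Tendsto (fun m => b' m i) Filter.atTop (nhds (b i))) :
    ∃ (m₀ : ℕ) (a' : ℕ → Fin d → ℝ),
      (∀ m, m₀ ≤ m → (∀ i, 0 < a' m i) ∧ Antitone (a' m) ∧ (∀ i, a i ≤ a' m i) ∧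
        ((∀ k, k ≤ d →
            ∏ i ∈ Finset.univ.filter (fun i : Fin d => (i : ℕ) < k), a' m i ≤
            ∏ i ∈ Finset.univ.filter (fun i : Fin d => (i : ℕ) < k), b' m i) ∧
          ∏ i, a' m i = ∏ i, b' m i)) ∧
      (∀ i, Filter.Tendsto (fun m => a' m i) Filter.atTop (nhds (a i))) := by
  rcases Nat.eq_zero_or_pos d with hd0 | hd
  · subst hd0
    refine ⟨0, fun _ i => i.elim0, fun m _ =>
      ⟨fun i => i.elim0, fun i => i.elim0, fun i => i.elim0, ⟨fun k _ => ?_, ?_⟩⟩,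
      fun i => i.elim0⟩
    · simp
    · simp
  · -- main case d ≥ 1
    have hlast : d - 1 < d := by omega
    set g : ℝ := a ⟨d - 1, hlast⟩ with hgdef
    have hg0 : 0 ≤ g := ha_nonneg _
    have hPd1 : ∀ i : Fin d, d - 1 ≤ (i : ℕ) → a i = g := by
      intro i hi
      have h1 : i = ⟨d - 1, hlast⟩ := Fin.ext (show (i:ℕ) = d - 1 from by have := i.isLt; omega)
      rw [h1]
    have hPex : ∃ j, ∀ i : Fin d, j ≤ (i : ℕ) → a i = g := ⟨d - 1, hPd1⟩
    set J := Nat.find hPex with hJdef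
    have hJspec : ∀ i : Fin d, J ≤ (i : ℕ) → a i = g := Nat.find_spec hPex
    have hJle : J ≤ d - 1 := Nat.find_le hPd1
    have hJd : J < d := by omega
    have hnJ : 0 < d - J := by omega
    have hJprev : ∀ _ : 0 < J, g < a ⟨J - 1, by omega⟩ := by
      intro h0
      have hmin := Nat.find_min hPex (show J - 1 < J by omega)
      push_neg at hmin
      obtain ⟨i, hi1, hi2⟩ := hmin
      have hiJ : (i : ℕ) = J - 1 := by
        by_contra hne
        exact hi2 (hJspec i (by omega))
      have hieq : i = ⟨J - 1, by omega⟩ := Fin.ext hiJ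
      have hge : g ≤ a i := by
        have h3 : i ≤ (⟨d - 1, hlast⟩ : Fin d) := by
          rw [Fin.le_def]; have := i.isLt; simp; omega
        exact ha_dec h3
      rw [← hieq]
      exact lt_of_le_of_ne hge (Ne.symm hi2)
    have hapos : ∀ i : Fin d, (i : ℕ) < J → 0 < a i := by
      intro i hi
      have h0 : 0 < J := by omega
      have h1 := hJprev h0
      have h2 : i ≤ (⟨J - 1, by omega⟩ : Fin d) := by
        rw [Fin.le_def]; simp; omega
      calc (0:ℝ) ≤ g := hg0
        _ < a ⟨J - 1, by omega⟩ := h1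
        _ ≤ a i := ha_dec h2
    set AJ := ∏ j ∈ Finset.range J, extAux a j with hAJdef
    have hAJpos : 0 < AJ := by
      refine Finset.prod_pos (fun j hj => ?_)
      have hjJ := Finset.mem_range.mp hj
      have hjd : j < d := by omega
      rw [extAux_lt a hjd]
      exact hapos _ (by simpa using hjJ)
    set P : ℕ → ℝ := fun m => ∏ i, b' m i with hPdef
    have hPpos : ∀ m, 0 < P m := fun m => Finset.prod_pos (fun i _ => hb'_pos m i)
    set c₀ : ℝ := ((d - J : ℕ) : ℝ)⁻¹ with hc₀def
    have hc₀ : 0 < c₀ := by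
      rw [hc₀def]
      exact inv_pos.mpr (by exact_mod_cast hnJ)
    set τ : ℕ → ℝ := fun m => (P m / AJ) ^ c₀ with hτdef
    have hτpos : ∀ m, 0 < τ m := fun m =>
      Real.rpow_pos_of_pos (div_pos (hPpos m) hAJpos) _
    have hcast : ((d - J : ℕ) : ℝ) ≠ 0 := by exact_mod_cast hnJ.ne'
    have hτpow : ∀ m, τ m ^ (d - J) = P m / AJ := by
      intro m
      rw [hτdef]
      rw [← Real.rpow_natCast ((P m / AJ) ^ c₀) (d - J),
        ← Real.rpow_mul (div_pos (hPpos m) hAJpos).le,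
        hc₀def, inv_mul_cancel₀ hcast, Real.rpow_one]
    have hbb' : ∀ m i, b i ≤ b' m i := fun m i =>
      (hb'_mono i).le_of_tendsto (hb'_lim i) m
    have hPge : ∀ m, ∏ i, b i ≤ P m := fun m =>
      Finset.prod_le_prod (fun i _ => hb_nonneg i) (fun i _ => hbb' m i)
    have hasplit : ∏ i, a i = AJ * g ^ (d - J) := by
      rw [fin_prod_eq_range a, ← Finset.prod_range_mul_prod_Ico (extAux a) hJd.le]
      congr 1
      have h2 : ∀ j ∈ Finset.Ico J d, extAux a j = g := by
        intro j hj
        rw [Finset.mem_Ico] at hj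
        rw [extAux_lt a hj.2]
        exact hJspec _ (by simpa using hj.1)
      rw [Finset.prod_congr rfl h2, Finset.prod_const, Nat.card_Ico]
    have hPab : ∏ i, a i = ∏ i, b i := hlogmaj.2
    have hgpow : ((g ^ (d - J) : ℝ)) ^ c₀ = g := by
      rw [← Real.rpow_natCast g (d - J), ← Real.rpow_mul hg0,
        mul_inv_cancel₀ hcast, Real.rpow_one]
    have hτge : ∀ m, g ≤ τ m := by
      intro m
      have h1 : g ^ (d - J) ≤ P m / AJ := by
        rw [le_div_iff₀ hAJpos]
        calc g ^ (d - J) * AJ = AJ * g ^ (d - J) := mul_comm _ _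
          _ = ∏ i, a i := hasplit.symm
          _ = ∏ i, b i := hPab
          _ ≤ P m := hPge m
      calc g = ((g ^ (d - J) : ℝ)) ^ c₀ := hgpow.symm
        _ ≤ (P m / AJ) ^ c₀ := Real.rpow_le_rpow (by positivity) h1 hc₀.le
        _ = τ m := rfl
    have hτlim : Tendsto τ atTop (nhds g) := by
      have h1 : Tendsto P atTop (nhds (∏ i, b i)) := by
        rw [hPdef]
        exact tendsto_finset_prod _ (fun i _ => hb'_lim i)
      have h2 : Tendsto (fun m => P m / AJ) atTop (nhds (g ^ (d - J))) := by
        have h3 : (∏ i, b i) / AJ = g ^ (d - J) := by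
          rw [← hPab, hasplit]
          field_simp
        rw [← h3]
        exact h1.div_const AJ
      have h3 : ContinuousAt (fun x : ℝ => x ^ c₀) (g ^ (d - J)) :=
        Real.continuousAt_rpow_const _ _ (Or.inr hc₀.le)
      have h4 := h3.tendsto.comp h2
      rw [hgpow] at h4
      exact h4
    set a' : ℕ → Fin d → ℝ := fun m i => if (i : ℕ) < J then a i else τ m with ha'def
    have hEv : ∀ᶠ m in atTop, ∀ i : Fin d, (i : ℕ) < J → τ m ≤ a i := by
      rcases Nat.eq_zero_or_pos J with h0 | h0
      · filter_upwards with m i hi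
        exact absurd hi (by omega)
      · have hlt := hJprev h0
        filter_upwards [hτlim.eventually_lt_const hlt] with m hm i hi
        refine hm.le.trans (ha_dec ?_)
        rw [Fin.le_def]; simp; omega
    obtain ⟨m₀, hm₀⟩ := eventually_atTop.mp hEv
    -- partial products of a'
    have hPa' : ∀ m k, J ≤ k → k ≤ d →
        ∏ j ∈ Finset.range k, extAux (a' m) j = AJ * τ m ^ (k - J) := by
      intro m k hJk hkd
      rw [← Finset.prod_range_mul_prod_Ico (extAux (a' m)) hJk]
      congr 1
      · rw [hAJdef]
        refine Finset.prod_congr rfl (fun j hj => ?_)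
        have hjJ := Finset.mem_range.mp hj
        have hjd : j < d := by omega
        rw [extAux_lt (a' m) hjd, extAux_lt a hjd, ha'def]
        simp [hjJ]
      · have h2 : ∀ j ∈ Finset.Ico J k, extAux (a' m) j = τ m := by
          intro j hj
          rw [Finset.mem_Ico] at hj
          have hjd : j < d := by omega
          rw [extAux_lt (a' m) hjd, ha'def]
          simp [show ¬ (j < J) by omega]
        rw [Finset.prod_congr rfl h2, Finset.prod_const, Nat.card_Ico]
    have hPb'd : ∀ m, ∏ j ∈ Finset.range d, extAux (b' m) j = P m := fun m =>
      (fin_prod_eq_range (b' m)).symm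
    -- AJ ≤ prefix of b'
    have hAJle : ∀ m, AJ ≤ ∏ j ∈ Finset.range J, extAux (b' m) j := by
      intro m
      have h1 := hlogmaj.1 J hJd.le
      rw [filter_prod_eq_range a hJd.le, filter_prod_eq_range b hJd.le] at h1
      refine le_trans h1 (Finset.prod_le_prod (fun j hj => ?_) (fun j hj => ?_))
      · have hjd : j < d := by have := Finset.mem_range.mp hj; omega
        rw [extAux_lt b hjd]; exact hb_nonneg _
      · have hjd : j < d := by have := Finset.mem_range.mp hj; omega
        rw [extAux_lt b hjd, extAux_lt (b' m) hjd]
        exact hbb' m _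
    -- the main cap
    have hcap : ∀ m k, J < k → k < d →
        AJ * τ m ^ (k - J) ≤ ∏ j ∈ Finset.range k, extAux (b' m) j := by
      intro m k hJk hkd
      have hxpos : ∀ j, 0 < extAux (b' m) j := by
        intro j
        by_cases h : j < d
        · rw [extAux_lt (b' m) h]; exact hb'_pos m _
        · simp [extAux, h]
      have hxdec : ∀ i j : ℕ, i ≤ j → j < d → extAux (b' m) j ≤ extAux (b' m) i := by
        intro i j hij hjd
        have hid : i < d := by omega
        rw [extAux_lt (b' m) hjd, extAux_lt (b' m) hid]
        exact hb'_dec m (by rw [Fin.le_def]; simpa using hij)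
      have hkey := key_ineq (extAux (b' m)) J k d hJk hkd hxpos hxdec AJ hAJpos (hAJle m)
      rw [hPb'd m] at hkey
      set p := k - J with hp
      set q := d - k with hq
      have hdJ : d - J = p + q := by omega
      have hpow : (AJ * τ m ^ p) ^ (p + q) = AJ ^ q * P m ^ p := by
        have hτ' : τ m ^ (p + q) = P m / AJ := by rw [← hdJ]; exact hτpow m
        have ht : (τ m ^ p) ^ (p + q) = (P m / AJ) ^ p := by
          rw [← pow_mul, mul_comm p (p + q), pow_mul, hτ']
        rw [mul_pow, ht, div_pow, pow_add]
        field_simp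
      refine le_of_pow_le_pow_left₀ (show p + q ≠ 0 by omega) ?_ ?_
      · exact Finset.prod_nonneg (fun j _ => (hxpos j).le)
      · rw [hpow, ← hdJ]
        exact hkey
    -- full product equality
    have hfull : ∀ m, ∏ i, a' m i = ∏ i, b' m i := by
      intro m
      rw [fin_prod_eq_range (a' m), hPa' m d hJd.le le_rfl, hτpow m]
      field_simp
      rfl
    refine ⟨m₀, a', fun m hm => ⟨?_, ?_, ?_, ⟨?_, hfull m⟩⟩, ?_⟩
    · -- positivity
      intro i
      rw [ha'def]
      by_cases h : (i : ℕ) < J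
      · simpa [h] using hapos i h
      · simpa [h] using hτpos m
    · -- antitone
      intro i j hij
      rw [ha'def]
      have hij' : (i : ℕ) ≤ j := Fin.le_def.mp hij
      by_cases hj : (j : ℕ) < J
      · have hi : (i : ℕ) < J := by omega
        simpa [hi, hj] using ha_dec hij
      · by_cases hi : (i : ℕ) < J
        · simpa [hi, hj] using hm₀ m hm i hi
        · simp [hi, hj]
    · -- a ≤ a'
      intro i
      rw [ha'def]
      by_cases h : (i : ℕ) < J
      · simp [h]
      · have : a i = g := hJspec i (by omega)
        simpa [h, this] using hτge m
    · -- partial caps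
      intro k hk
      rw [filter_prod_eq_range (a' m) hk, filter_prod_eq_range (b' m) hk]
      rcases le_or_gt k J with hkJ | hkJ
      · have h1 : ∏ j ∈ Finset.range k, extAux (a' m) j
            = ∏ j ∈ Finset.range k, extAux a j := by
          refine Finset.prod_congr rfl (fun j hj => ?_)
          have hjk := Finset.mem_range.mp hj
          have hjd : j < d := by omega
          rw [extAux_lt (a' m) hjd, extAux_lt a hjd, ha'def]
          simp [show j < J by omega]
        have h2 := hlogmaj.1 k hk
        rw [filter_prod_eq_range a hk, filter_prod_eq_range b hk] at h2
        rw [h1]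
        refine le_trans h2 (Finset.prod_le_prod (fun j hj => ?_) (fun j hj => ?_))
        · have hjd : j < d := by have := Finset.mem_range.mp hj; omega
          rw [extAux_lt b hjd]; exact hb_nonneg _
        · have hjd : j < d := by have := Finset.mem_range.mp hj; omega
          rw [extAux_lt b hjd, extAux_lt (b' m) hjd]
          exact hbb' m _
      · rw [hPa' m k hkJ.le hk]
        rcases eq_or_lt_of_le hk with hkd | hkd
        · subst hkd
          rw [hτpow m, hPb'd m]
          field_simp
          rfl
        · exact hcap m k hkJ hkd
    · -- tendsto
      intro i
      rw [ha'def]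
      by_cases h : (i : ℕ) < J
      · simp only [h, if_true]; exact tendsto_const_nhds
      · have hgi : a i = g := hJspec i (by omega)
        simpa [h, hgi] using hτlim
end
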